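/- arXiv:2112.13020 — 7 statements merged into one kernel-verified Lean document; each statement's English description precedes it below -/
import Mathlib

section
/- Fix an integer N ≥ 1 and a confidence probability β ∈ (0,1). Suppose λ* : Ω^N → ℝ is a function satisfying λ*(ω) ≥ max_{1 ≤ i ≤ N} sol(ωᵢ) for every ω ∈ Ω^N (the specification threshold is chosen after observing the samples so that all N sampled instantiations satisfy the specification), and suppose the set { ω ∈ Ω^N : μ{ u ∈ Ω : sol(u) ≤ λ*(ω) } ≥ (1−β)^{1/N} } is μ^N-measurable. Then the μ^N-measure of this set is at least β. (Theorem 1: with confidence at least β, the satisfaction probability of the specification with sample-dependent threshold λ*(U_N) is at least (1−β)^{1/N}.) -/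
open MeasureTheory

/-- Key lemma: the set of points `v` whose "CDF value" `F(sol v)` is below `ε`
is contained in a measurable set of measure at most `ε`. -/
lemma scenario_key {Ω : Type*} [MeasurableSpace Ω] (μ : Measure Ω)
    [IsProbabilityMeasure μ] (sol : Ω → ℝ) (hsol : Measurable sol) (ε : ℝ) :
    ∃ A' : Set Ω, MeasurableSet A' ∧
      {v : Ω | (μ {u : Ω | sol u ≤ sol v}).toReal < ε} ⊆ A' ∧
      μ A' ≤ ENNReal.ofReal ε := by
  set S : Set ℝ := {t : ℝ | (μ {u : Ω | sol u ≤ t}).toReal < ε} with hS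
  have hmemS : ∀ t ∈ S, μ {u : Ω | sol u ≤ t} ≤ ENNReal.ofReal ε := by
    intro t ht
    exact le_of_lt ((ENNReal.lt_ofReal_iff_toReal_lt (measure_ne_top μ _)).2 ht)
  have hdown : ∀ t ∈ S, ∀ t' ≤ t, t' ∈ S := by
    intro t ht t' ht'
    have hmono : μ {u : Ω | sol u ≤ t'} ≤ μ {u : Ω | sol u ≤ t} :=
      measure_mono fun u hu => le_trans hu ht'
    have := ENNReal.toReal_mono (measure_ne_top μ _) hmono
    exact lt_of_le_of_lt this ht
  have hsub0 : {v : Ω | (μ {u : Ω | sol u ≤ sol v}).toReal < ε} = sol ⁻¹' S := rfl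
  by_cases hne : S.Nonempty
  · by_cases hbdd : BddAbove S
    · set s := sSup S with hs
      by_cases hsS : s ∈ S
      · refine ⟨{u : Ω | sol u ≤ s}, hsol measurableSet_Iic, ?_, hmemS s hsS⟩
        intro v hv
        exact le_csSup hbdd hv
      · refine ⟨⋃ n : ℕ, {u : Ω | sol u ≤ s - 1 / (n + 1)},
          MeasurableSet.iUnion fun n => hsol measurableSet_Iic, ?_, ?_⟩
        · intro v hv
          have hvS : sol v ∈ S := hv
          have hlt : sol v < s := lt_of_le_of_ne (le_csSup hbdd hvS)
            (fun h => hsS (h ▸ hvS))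
          obtain ⟨n, hn⟩ := exists_nat_one_div_lt (sub_pos.2 hlt)
          exact Set.mem_iUnion.2 ⟨n, by simp only [Set.mem_setOf_eq]; linarith⟩
        · have hdir : Directed (· ⊆ ·) (fun n : ℕ => {u : Ω | sol u ≤ s - 1 / (n + 1)}) := by
            apply Monotone.directed_le
            intro n m hnm u hu
            have hnm' : (n : ℝ) ≤ m := Nat.cast_le.2 hnm
            have h1 : (1 : ℝ) / (m + 1) ≤ 1 / (n + 1) := by
              apply one_div_le_one_div_of_le
              · positivity
              · linarith
            simp only [Set.mem_setOf_eq] at hu ⊢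
            linarith
          rw [hdir.measure_iUnion]
          apply iSup_le
          intro n
          apply hmemS
          have hlt : s - 1 / (n + 1 : ℝ) < s := by
            have : (0 : ℝ) < 1 / (n + 1) := by positivity
            linarith
          obtain ⟨t, htS, ht⟩ := exists_lt_of_lt_csSup hne hlt
          exact hdown t htS _ (le_of_lt ht)
    · refine ⟨⋃ n : ℕ, {u : Ω | sol u ≤ (n : ℝ)},
        MeasurableSet.iUnion fun n => hsol measurableSet_Iic, ?_, ?_⟩
      · intro v hv
        obtain ⟨n, hn⟩ := exists_nat_ge (sol v)
        exact Set.mem_iUnion.2 ⟨n, hn⟩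
      · have hdir : Directed (· ⊆ ·) (fun n : ℕ => {u : Ω | sol u ≤ (n : ℝ)}) := by
          apply Monotone.directed_le
          intro n m hnm u hu
          simp only [Set.mem_setOf_eq] at hu ⊢
          exact le_trans hu (by exact_mod_cast hnm)
        rw [hdir.measure_iUnion]
        apply iSup_le
        intro n
        apply hmemS
        obtain ⟨t, htS, ht⟩ := not_bddAbove_iff.1 hbdd (n : ℝ)
        exact hdown t htS _ (le_of_lt ht)
  · refine ⟨∅, MeasurableSet.empty, ?_, ?_⟩
    · intro v hv
      exact hne ⟨sol v, hv⟩
    · simp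

/-- **Theorem 1 (scenario bound with sample-dependent threshold).**
With confidence at least `β`, the satisfaction probability of the specification
with sample-dependent threshold `λ*(U_N)` is at least `(1-β)^(1/N)`. -/
theorem scenario_variable_threshold
    {Ω : Type*} [MeasurableSpace Ω] (μ : Measure Ω) [IsProbabilityMeasure μ]
    (sol : Ω → ℝ) (hsol : Measurable sol)
    (N : ℕ) (hN : 1 ≤ N) (β : ℝ) (hβ : β ∈ Set.Ioo (0 : ℝ) 1)
    (lam : (Fin N → Ω) → ℝ)
    (hlam : ∀ ω : Fin N → Ω, ∀ i : Fin N, sol (ω i) ≤ lam ω)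
    (hmeas : MeasurableSet {ω : Fin N → Ω |
      (1 - β) ^ ((1 : ℝ) / N) ≤ (μ {u : Ω | sol u ≤ lam ω}).toReal}) :
    ENNReal.ofReal β ≤
      (Measure.pi (fun _ : Fin N => μ))
        {ω : Fin N → Ω |
          (1 - β) ^ ((1 : ℝ) / N) ≤ (μ {u : Ω | sol u ≤ lam ω}).toReal} := by
  obtain ⟨hβ0, hβ1⟩ := hβ
  set ε : ℝ := (1 - β) ^ ((1 : ℝ) / N) with hε
  set P : Measure (Fin N → Ω) := Measure.pi (fun _ : Fin N => μ) with hP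
  set G : Set (Fin N → Ω) :=
    {ω : Fin N → Ω | ε ≤ (μ {u : Ω | sol u ≤ lam ω}).toReal} with hG
  obtain ⟨A', hA'meas, hsub, hA'le⟩ := scenario_key μ sol hsol ε
  -- complement is inside the product set
  have hcsub : Gᶜ ⊆ Set.univ.pi (fun _ : Fin N => A') := by
    intro ω hω
    simp only [hG, Set.mem_compl_iff, Set.mem_setOf_eq, not_le] at hω
    intro i _
    apply hsub
    have hmono : μ {u : Ω | sol u ≤ sol (ω i)} ≤ μ {u : Ω | sol u ≤ lam ω} :=
      measure_mono fun u hu => le_trans hu (hlam ω i)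
    exact lt_of_le_of_lt (ENNReal.toReal_mono (measure_ne_top μ _) hmono) hω
  have hεN : ε ^ N = 1 - β := by
    rw [hε, ← Real.rpow_natCast ((1 - β) ^ ((1 : ℝ) / N)) N,
      ← Real.rpow_mul (by linarith)]
    have hN' : (N : ℝ) ≠ 0 := Nat.cast_ne_zero.2 (by omega)
    rw [one_div_mul_cancel hN', Real.rpow_one]
  have hε0 : 0 ≤ ε := Real.rpow_nonneg (by linarith) _
  have hbound : P Gᶜ ≤ ENNReal.ofReal (1 - β) := by
    calc P Gᶜ ≤ P (Set.univ.pi fun _ : Fin N => A') := measure_mono hcsub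
      _ = ∏ _i : Fin N, μ A' := Measure.pi_pi _ _
      _ = (μ A') ^ N := by rw [Finset.prod_const, Finset.card_univ, Fintype.card_fin]
      _ ≤ (ENNReal.ofReal ε) ^ N := pow_le_pow_left' hA'le N
      _ = ENNReal.ofReal (ε ^ N) := (ENNReal.ofReal_pow hε0 N).symm
      _ = ENNReal.ofReal (1 - β) := by rw [hεN]
  have hsum : P G + P Gᶜ = 1 := prob_add_prob_compl hmeas
  have hkey : ENNReal.ofReal β + ENNReal.ofReal (1 - β) ≤ P G + ENNReal.ofReal (1 - β) := by
    rw [← ENNReal.ofReal_add (by linarith) (by linarith)]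
    have : β + (1 - β) = 1 := by ring
    rw [this, ENNReal.ofReal_one, ← hsum]
    exact add_le_add_right hbound _
  exact (ENNReal.add_le_add_iff_right ENNReal.ofReal_ne_top).1 hkey
end

section
/- For every integer N ≥ 1 and every c ∈ [0,1], μ^N{ ω ∈ Ω^N : μ{ u ∈ Ω : sol(u) ≤ max_{1 ≤ i ≤ N} sol(ωᵢ) } < c } ≤ c^N. (The probability that the maximum of N i.i.d. samples of sol fails to dominate a μ-fraction c of all instantiations is at most c^N; in particular, the failure probability of the scenario bound decays exponentially in N.) -/
open MeasureTheory

/-- The probability that the maximum of `N` i.i.d. samples of `sol` fails to dominate a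
`μ`-fraction `c` of all instantiations is at most `c^N`. -/
theorem scenario_failure_bound
    {Ω : Type*} [MeasurableSpace Ω] (μ : Measure Ω) [IsProbabilityMeasure μ]
    (sol : Ω → ℝ) (hsol : Measurable sol)
    (N : ℕ) (hN : 1 ≤ N) (c : ℝ) (hc : c ∈ Set.Icc (0 : ℝ) 1) :
    (Measure.pi (fun _ : Fin N => μ))
        {ω : Fin N → Ω |
          (μ {u : Ω | sol u ≤
            Finset.univ.sup' (Finset.univ_nonempty_iff.mpr ⟨⟨0, hN⟩⟩)
              (fun i : Fin N => sol (ω i))}).toReal < c}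
      ≤ ENNReal.ofReal (c ^ N) := by
  obtain ⟨hc0, hc1⟩ := hc
  set F : ℝ → ℝ := fun t => (μ {u : Ω | sol u ≤ t}).toReal with hFdef
  have hFmono : Monotone F := by
    intro a b hab
    exact ENNReal.toReal_mono (measure_ne_top μ _)
      (measure_mono fun u hu => le_trans hu hab)
  have le_ofReal : ∀ t : ℝ, F t < c → μ {u : Ω | sol u ≤ t} ≤ ENNReal.ofReal c := by
    intro t ht
    rw [← ENNReal.ofReal_toReal (measure_ne_top μ {u : Ω | sol u ≤ t})]
    exact ENNReal.ofReal_le_ofReal ht.le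
  set A : Set Ω := {u : Ω | F (sol u) < c} with hAdef
  -- key single-sample bound: μ A ≤ c
  have key : μ A ≤ ENNReal.ofReal c := by
    set S : Set ℝ := {t : ℝ | F t < c} with hSdef
    by_cases hS : S.Nonempty
    · by_cases hB : BddAbove S
      · set s₀ : ℝ := sSup S with hs₀
        by_cases hFs : F s₀ < c
        · have hsub : A ⊆ {u : Ω | sol u ≤ s₀} := fun u hu => le_csSup hB hu
          exact le_trans (measure_mono hsub) (le_ofReal s₀ hFs)
        · have hsub : A ⊆ {u : Ω | sol u < s₀} := by
            intro u hu
            have hle : sol u ≤ s₀ := le_csSup hB hu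
            rcases lt_or_eq_of_le hle with h | h
            · exact h
            · exact absurd (h ▸ hu) hFs
          have hcover : {u : Ω | sol u < s₀} ⊆
              ⋃ n : ℕ, {u : Ω | sol u ≤ s₀ - 1 / (n + 1)} := by
            intro u hu
            have hu' : sol u < s₀ := hu
            obtain ⟨n, hn⟩ := exists_nat_one_div_lt (sub_pos.mpr hu')
            exact Set.mem_iUnion.mpr ⟨n, by simp only [Set.mem_setOf_eq]; linarith⟩
          have hdir : Directed (· ⊆ ·) fun n : ℕ => {u : Ω | sol u ≤ s₀ - 1 / (n + 1)} := by
            apply Monotone.directed_le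
            intro n m hnm u hu
            have hcast : (n : ℝ) ≤ (m : ℝ) := Nat.cast_le.mpr hnm
            have h1 : (1 : ℝ) / (m + 1) ≤ 1 / (n + 1) := by
              apply one_div_le_one_div_of_le
              · positivity
              · linarith
            simp only [Set.mem_setOf_eq] at hu ⊢
            linarith
          calc μ A ≤ μ (⋃ n : ℕ, {u : Ω | sol u ≤ s₀ - 1 / (n + 1)}) :=
                measure_mono (hsub.trans hcover)
            _ = ⨆ n : ℕ, μ {u : Ω | sol u ≤ s₀ - 1 / (n + 1)} :=
                Directed.measure_iUnion hdir
            _ ≤ ENNReal.ofReal c := by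
                apply iSup_le
                intro n
                apply le_ofReal
                have hlt : s₀ - 1 / (n + 1) < s₀ := by
                  have : (0 : ℝ) < 1 / (n + 1) := by positivity
                  linarith
                obtain ⟨t, htS, hgt⟩ := exists_lt_of_lt_csSup hS hlt
                exact lt_of_le_of_lt (hFmono hgt.le) htS
      · -- S unbounded above : then μ univ ≤ ofReal c
        have huniv : (Set.univ : Set Ω) = ⋃ n : ℕ, {u : Ω | sol u ≤ (n : ℝ)} := by
          ext u
          simp only [Set.mem_univ, true_iff, Set.mem_iUnion, Set.mem_setOf_eq]
          exact exists_nat_ge (sol u)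
        have hdir : Directed (· ⊆ ·) fun n : ℕ => {u : Ω | sol u ≤ (n : ℝ)} := by
          apply Monotone.directed_le
          intro n m hnm u hu
          simp only [Set.mem_setOf_eq] at hu ⊢
          exact hu.trans (by exact_mod_cast hnm)
        calc μ A ≤ μ Set.univ := measure_mono (Set.subset_univ A)
          _ = ⨆ n : ℕ, μ {u : Ω | sol u ≤ (n : ℝ)} := by
              rw [huniv]; exact Directed.measure_iUnion hdir
          _ ≤ ENNReal.ofReal c := by
              apply iSup_le
              intro n
              apply le_ofReal
              obtain ⟨t, htS⟩ := hS
              obtain ⟨t', ht'S, hgt⟩ := not_bddAbove_iff.mp hB (n : ℝ)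
              exact lt_of_le_of_lt (hFmono hgt.le) ht'S
    · have hA : A = ∅ := by
        ext u
        simp only [Set.mem_empty_iff_false, iff_false, hAdef, Set.mem_setOf_eq]
        intro hu
        exact hS ⟨sol u, hu⟩
      rw [hA, measure_empty]
      exact zero_le
  have hsub : {ω : Fin N → Ω |
      F (Finset.univ.sup' (Finset.univ_nonempty_iff.mpr ⟨⟨0, hN⟩⟩)
        (fun i : Fin N => sol (ω i))) < c} ⊆ Set.pi Set.univ (fun _ : Fin N => A) := by
    intro ω hω i _
    exact lt_of_le_of_lt
      (hFmono (Finset.le_sup' (fun i : Fin N => sol (ω i)) (Finset.mem_univ i))) hω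
  refine le_trans (measure_mono hsub) ?_
  rw [Measure.pi_pi]
  calc ∏ _i : Fin N, μ A = (μ A) ^ N := by simp
    _ ≤ (ENNReal.ofReal c) ^ N := pow_le_pow_left' key N
    _ = ENNReal.ofReal (c ^ N) := (ENNReal.ofReal_pow hc0 N).symm
end

section
/- Fix an integer N ≥ 1, a confidence probability β ∈ (0,1), a threshold λ ∈ ℝ, and numbers t*(k) as in the context. For ω ∈ Ω^N let N_viol(ω) = #{ i ∈ {1,…,N} : sol(ωᵢ) > λ } be the number of samples violating the specification. Then μ^N{ ω ∈ Ω^N : μ{ u ∈ Ω : sol(u) ≤ λ } ≥ t*(N_viol(ω)) } ≥ β. (Theorem 2: with confidence at least β, the satisfaction probability of the specification with fixed threshold λ is at least t*(N_viol).) -/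
open MeasureTheory

lemma binom_cdf_mono (N k : ℕ) (hk : k < N) :
    MonotoneOn (fun t : ℝ => ∑ i ∈ Finset.range (k + 1),
      (N.choose i : ℝ) * (1 - t) ^ i * t ^ (N - i)) (Set.Icc (0 : ℝ) 1) := by
  set g : ℝ → ℝ := fun t => ∑ i ∈ Finset.range (k + 1),
      (N.choose i : ℝ) * (1 - t) ^ i * t ^ (N - i) with hg
  have hderiv : ∀ t : ℝ, HasDerivAt g
      ((N.choose k : ℝ) * ((N - k : ℕ) : ℝ) * (1 - t) ^ k * t ^ (N - k - 1)) t := by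
    intro t
    set w : ℕ → ℝ := fun j => Nat.casesOn j 0
      (fun j => (N.choose j : ℝ) * ((N - j : ℕ) : ℝ) * (1 - t) ^ j * t ^ (N - j - 1)) with hw
    have key : ∀ i ∈ Finset.range (k + 1),
        HasDerivAt (fun t : ℝ => (N.choose i : ℝ) * (1 - t) ^ i * t ^ (N - i))
          (w (i + 1) - w i) t := by
      intro i hi
      have hiN : i < N := lt_of_le_of_lt (Nat.lt_succ_iff.mp (Finset.mem_range.mp hi)) hk
      have h1 : HasDerivAt (fun t : ℝ => (1 - t) ^ i)
          ((i : ℝ) * (1 - t) ^ (i - 1) * (-1)) t :=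
        ((hasDerivAt_id t).const_sub 1).pow i
      have h2 : HasDerivAt (fun t : ℝ => t ^ (N - i))
          (((N - i : ℕ) : ℝ) * t ^ (N - i - 1)) t := hasDerivAt_pow (N - i) t
      have h3 := (h1.mul h2).const_mul (N.choose i : ℝ)
      have heq : (N.choose i : ℝ) * ((i : ℝ) * (1 - t) ^ (i - 1) * (-1) * t ^ (N - i) +
          (1 - t) ^ i * (((N - i : ℕ) : ℝ) * t ^ (N - i - 1))) = w (i + 1) - w i := by
        cases i with
        | zero => simp [hw]
        | succ j =>
          have hjN : j < N := lt_trans (Nat.lt_succ_self j) hiN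
          have hch : (N.choose (j + 1) : ℝ) * ((j : ℝ) + 1) = (N.choose j : ℝ) * ((N - j : ℕ) : ℝ) := by
            exact_mod_cast congrArg (Nat.cast : ℕ → ℝ) (Nat.choose_succ_right_eq N j)
          have c1 : ((N - j : ℕ) : ℝ) = (N : ℝ) - j := by rw [Nat.cast_sub hjN.le]
          have hsub1 : 1 ≤ N - j := by omega
          have c2 : ((N - j - 1 : ℕ) : ℝ) = (N : ℝ) - j - 1 := by
            rw [Nat.cast_sub hsub1, c1]; norm_num
          rw [c1] at hch
          simp only [hw, Nat.succ_sub_one]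
          rw [show N - (j + 1) = N - j - 1 from by omega]
          rw [c2, c1]
          push_cast
          linear_combination (-((1 - t) ^ j * t ^ (N - j - 1))) * hch
      have h4 : (fun t : ℝ => (N.choose i : ℝ) * ((1 - t) ^ i * t ^ (N - i)))
          = fun t : ℝ => (N.choose i : ℝ) * (1 - t) ^ i * t ^ (N - i) := by
        funext t; ring
      rw [← heq]
      simpa [h4, mul_assoc] using h3
    have := HasDerivAt.fun_sum key
    rw [Finset.sum_range_sub w (k + 1)] at this
    simpa [hw] using this
  apply monotoneOn_of_deriv_nonneg (convex_Icc 0 1)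
  · exact fun t _ => ((hderiv t).differentiableAt).continuousAt.continuousWithinAt
  · exact fun t _ => ((hderiv t).differentiableAt).differentiableWithinAt
  · intro x hx
    rw [interior_Icc] at hx
    rw [(hderiv x).deriv]
    have h1 : (0:ℝ) ≤ 1 - x := by linarith [hx.2]
    exact mul_nonneg (mul_nonneg (mul_nonneg (Nat.cast_nonneg _) (Nat.cast_nonneg _))
      (pow_nonneg h1 k)) (pow_nonneg hx.1.le _)
open MeasureTheory

lemma meas_cnt {Ω : Type*} [MeasurableSpace Ω] (μ : Measure Ω) [IsProbabilityMeasure μ]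
    (sol : Ω → ℝ) (hsol : Measurable sol) (lam : ℝ) (N k : ℕ) :
    Measure.pi (fun _ : Fin N => μ)
      {ω : Fin N → Ω | (Finset.univ.filter (fun i : Fin N => lam < sol (ω i))).card = k}
    = (N.choose k : ENNReal) * (μ {u | lam < sol u}) ^ k * (μ {u | sol u ≤ lam}) ^ (N - k) := by
  classical
  set B : Set Ω := {u | lam < sol u} with hB
  set A : Set Ω := {u | sol u ≤ lam} with hA
  have hBm : MeasurableSet B := measurableSet_lt measurable_const hsol
  have hAm : MeasurableSet A := measurableSet_le hsol measurable_const
  have hset : {ω : Fin N → Ω | (Finset.univ.filter (fun i : Fin N => lam < sol (ω i))).card = k}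
      = ⋃ s ∈ Finset.powersetCard k (Finset.univ : Finset (Fin N)),
          Set.univ.pi (fun i => if i ∈ s then B else A) := by
    ext ω
    simp only [Set.mem_setOf_eq, Set.mem_iUnion, Finset.mem_powersetCard, Set.mem_pi,
      Set.mem_univ, forall_true_left, exists_prop]
    constructor
    · intro h
      refine ⟨Finset.univ.filter (fun i : Fin N => lam < sol (ω i)),
        ⟨Finset.subset_univ _, h⟩, fun i => ?_⟩
      by_cases hi : lam < sol (ω i) <;> simp [hi, hB, hA, le_of_not_gt]
    · rintro ⟨s, ⟨-, hcard⟩, hmem⟩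
      have : Finset.univ.filter (fun i : Fin N => lam < sol (ω i)) = s := by
        ext i
        have := hmem i
        by_cases hi : i ∈ s <;> simp [hi, hB, hA] at this ⊢ <;> exact this
      rw [this, hcard]
  rw [hset, measure_biUnion_finset]
  · have hval : ∀ s ∈ Finset.powersetCard k (Finset.univ : Finset (Fin N)),
        Measure.pi (fun _ : Fin N => μ) (Set.univ.pi (fun i => if i ∈ s then B else A))
          = (μ B) ^ k * (μ A) ^ (N - k) := by
      intro s hs
      obtain ⟨-, hcard⟩ := Finset.mem_powersetCard.mp hs
      rw [Measure.pi_pi]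
      rw [← Finset.prod_mul_prod_compl s]
      have h1 : ∏ i ∈ s, μ (if i ∈ s then B else A) = (μ B) ^ k := by
        rw [Finset.prod_congr rfl (fun i hi => by rw [if_pos hi]), Finset.prod_const, hcard]
      have h2 : ∏ i ∈ sᶜ, μ (if i ∈ s then B else A) = (μ A) ^ (N - k) := by
        rw [Finset.prod_congr rfl (fun i hi => by rw [if_neg (Finset.mem_compl.mp hi)]),
          Finset.prod_const, Finset.card_compl, hcard, Fintype.card_fin]
      rw [h1, h2]
    rw [Finset.sum_congr rfl hval, Finset.sum_const, Finset.card_powersetCard,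
      Finset.card_univ, Fintype.card_fin, nsmul_eq_mul, mul_assoc]
  · intro s hs s' hs' hne
    refine Set.disjoint_left.mpr fun ω h1 h2 => ?_
    have : ∃ i, ¬ (i ∈ s ↔ i ∈ s') := by
      by_contra h; push_neg at h
      exact hne (Finset.ext h)
    obtain ⟨i, hi⟩ := this
    have m1 := h1 i (Set.mem_univ i)
    have m2 := h2 i (Set.mem_univ i)
    by_cases h3 : i ∈ s <;> by_cases h4 : i ∈ s' <;>
      simp [h3, h4, hB, hA] at m1 m2 hi <;> linarith
  · intro s hs
    exact MeasurableSet.univ_pi fun i => by split_ifs; exacts [hBm, hAm]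


/-- **Theorem 2.** With confidence at least `β`, the satisfaction probability of the
specification with fixed threshold `lam` is at least `t*(N_viol)`, where `N_viol` is the
number of violating samples. -/
theorem scenario_fixed_threshold
    {Ω : Type*} [MeasurableSpace Ω] (μ : Measure Ω) [IsProbabilityMeasure μ]
    (sol : Ω → ℝ) (hsol : Measurable sol)
    (N : ℕ) (hN : 1 ≤ N) (β : ℝ) (hβ : β ∈ Set.Ioo (0 : ℝ) 1) (lam : ℝ)
    (tstar : ℕ → ℝ)
    (htstar_mem : ∀ k, k ≤ N - 1 → tstar k ∈ Set.Icc (0 : ℝ) 1)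
    (htstar_eq : ∀ k, k ≤ N - 1 →
      ∑ i ∈ Finset.range (k + 1),
        (N.choose i : ℝ) * (1 - tstar k) ^ i * (tstar k) ^ (N - i) = (1 - β) / N)
    (htstar_N : tstar N = 0) :
    ENNReal.ofReal β ≤
      (Measure.pi (fun _ : Fin N => μ))
        {ω : Fin N → Ω |
          tstar ((Finset.univ.filter (fun i : Fin N => lam < sol (ω i))).card) ≤
            (μ {u : Ω | sol u ≤ lam}).toReal} := by
  classical
  set π := Measure.pi (fun _ : Fin N => μ) with hπ
  set A : Set Ω := {u : Ω | sol u ≤ lam} with hA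
  set B : Set Ω := {u : Ω | lam < sol u} with hB
  have hAm : MeasurableSet A := measurableSet_le hsol measurable_const
  have hABc : B = Aᶜ := by ext u; simp [hA, hB, not_le]
  have hμB : μ B = 1 - μ A := by
    rw [hABc, measure_compl hAm (measure_ne_top μ A), measure_univ]
  have hpA1 : μ A ≤ 1 := prob_le_one
  set p : ℝ := (μ A).toReal with hp
  set q : ℝ := (μ B).toReal with hq
  have hp0 : 0 ≤ p := ENNReal.toReal_nonneg
  have hp1 : p ≤ 1 := by
    simpa using ENNReal.toReal_mono ENNReal.one_ne_top hpA1
  have hqp : q = 1 - p := by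
    rw [hq, hμB, ENNReal.toReal_sub_of_le hpA1 ENNReal.one_ne_top, ENNReal.toReal_one]
  set cnt : (Fin N → Ω) → ℕ :=
    fun ω => (Finset.univ.filter (fun i : Fin N => lam < sol (ω i))).card with hcntdef
  have hcnt : Measurable cnt := by
    have : cnt = fun ω => ∑ i : Fin N, if lam < sol (ω i) then 1 else 0 :=
      funext fun ω => Finset.card_filter _ _
    rw [this]
    exact Finset.measurable_sum _ fun i _ =>
      Measurable.ite (measurableSet_lt measurable_const (hsol.comp (measurable_pi_apply i)))
        measurable_const measurable_const
  set G : Set (Fin N → Ω) := {ω | tstar (cnt ω) ≤ p} with hG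
  have hGm : MeasurableSet G := hcnt (show MeasurableSet {k : ℕ | tstar k ≤ p} from trivial)
  have hβ2 : 0 ≤ (1 - β) / N :=
    div_nonneg (by linarith [hβ.2]) (Nat.cast_nonneg N)
  have hNne : (N : ℝ) ≠ 0 := Nat.cast_ne_zero.mpr (by omega)
  -- bound on the bad event
  have hsub : Gᶜ ⊆ ⋃ k ∈ Finset.range N, {ω : Fin N → Ω | cnt ω = k ∧ p < tstar k} := by
    intro ω hω
    have hω' : p < tstar (cnt ω) := not_le.mp hω
    have hle : cnt ω ≤ N := by
      calc cnt ω ≤ (Finset.univ : Finset (Fin N)).card := Finset.card_filter_le _ _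
      _ = N := by simp
    have hlt : cnt ω < N := by
      rcases lt_or_eq_of_le hle with h | h
      · exact h
      · rw [h, htstar_N] at hω'; linarith
    exact Set.mem_biUnion (Finset.mem_range.mpr hlt) ⟨rfl, hω'⟩
  have hbound : ∀ k ∈ Finset.range N,
      π {ω : Fin N → Ω | cnt ω = k ∧ p < tstar k} ≤ ENNReal.ofReal ((1 - β) / N) := by
    intro k hk
    have hkN : k < N := Finset.mem_range.mp hk
    by_cases hpk : p < tstar k
    · have hsets : {ω : Fin N → Ω | cnt ω = k ∧ p < tstar k}
          = {ω : Fin N → Ω | (Finset.univ.filter (fun i : Fin N => lam < sol (ω i))).card = k} := by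
        ext ω; simp [hcntdef, hpk]
      rw [hsets, hπ, meas_cnt μ sol hsol lam N k]
      have hfin : (N.choose k : ENNReal) * (μ {u | lam < sol u}) ^ k
          * (μ {u | sol u ≤ lam}) ^ (N - k) ≠ ⊤ :=
        ENNReal.mul_ne_top (ENNReal.mul_ne_top (ENNReal.natCast_ne_top _)
          (ENNReal.pow_ne_top (measure_ne_top μ _))) (ENNReal.pow_ne_top (measure_ne_top μ _))
      rw [ENNReal.le_ofReal_iff_toReal_le hfin hβ2,
        ENNReal.toReal_mul, ENNReal.toReal_mul, ENNReal.toReal_pow, ENNReal.toReal_pow,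
        ENNReal.toReal_natCast]
      have hkN1 : k ≤ N - 1 := by omega
      have h1 : (N.choose k : ℝ) * q ^ k * p ^ (N - k)
          ≤ ∑ i ∈ Finset.range (k + 1), (N.choose i : ℝ) * (1 - p) ^ i * p ^ (N - i) := by
        rw [hqp]
        exact Finset.single_le_sum
          (f := fun i => (N.choose i : ℝ) * (1 - p) ^ i * p ^ (N - i))
          (fun i _ => mul_nonneg (mul_nonneg (Nat.cast_nonneg _)
            (pow_nonneg (by linarith) i)) (pow_nonneg hp0 _))
          (Finset.self_mem_range_succ k)
      have h2 : (∑ i ∈ Finset.range (k + 1), (N.choose i : ℝ) * (1 - p) ^ i * p ^ (N - i))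
          ≤ ∑ i ∈ Finset.range (k + 1),
              (N.choose i : ℝ) * (1 - tstar k) ^ i * (tstar k) ^ (N - i) :=
        binom_cdf_mono N k hkN ⟨hp0, hp1⟩ (htstar_mem k hkN1) (le_of_lt hpk)
      have h3 := htstar_eq k hkN1
      exact le_trans h1 (le_trans h2 (le_of_eq h3))
    · have hsets : {ω : Fin N → Ω | cnt ω = k ∧ p < tstar k} = ∅ := by
        ext ω; simp [hpk]
      rw [hsets]; simp
  have hbad : π Gᶜ ≤ ENNReal.ofReal (1 - β) := by
    calc π Gᶜ ≤ π (⋃ k ∈ Finset.range N, {ω : Fin N → Ω | cnt ω = k ∧ p < tstar k}) :=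
        measure_mono hsub
    _ ≤ ∑ k ∈ Finset.range N, π {ω : Fin N → Ω | cnt ω = k ∧ p < tstar k} :=
        measure_biUnion_finset_le _ _
    _ ≤ ∑ _k ∈ Finset.range N, ENNReal.ofReal ((1 - β) / N) := Finset.sum_le_sum hbound
    _ = (N : ENNReal) * ENNReal.ofReal ((1 - β) / N) := by
        rw [Finset.sum_const, Finset.card_range, nsmul_eq_mul]
    _ = ENNReal.ofReal (1 - β) := by
        rw [← ENNReal.ofReal_natCast N, ← ENNReal.ofReal_mul (Nat.cast_nonneg N),
          mul_div_cancel₀ _ hNne]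
  have hsum : π G + π Gᶜ = 1 := by
    rw [measure_add_measure_compl hGm, measure_univ]
  have hfinal : ENNReal.ofReal β + π Gᶜ ≤ π G + π Gᶜ := by
    rw [hsum]
    calc ENNReal.ofReal β + π Gᶜ ≤ ENNReal.ofReal β + ENNReal.ofReal (1 - β) :=
        add_le_add_right hbad _
    _ = ENNReal.ofReal (β + (1 - β)) :=
        (ENNReal.ofReal_add (le_of_lt hβ.1) (by linarith [hβ.2])).symm
    _ = 1 := by norm_num
  exact (ENNReal.add_le_add_iff_right (measure_ne_top _ _)).mp hfinal
end

section
/- Fix an integer N ≥ 1, a confidence probability β ∈ (0,1), a threshold λ ∈ ℝ, and numbers t*(k) as in the context. For ω ∈ Ω^N let N_viol(ω) = #{ i : sol(ωᵢ) > λ }, and when N_viol(ω) < N let τ⁺(ω) = max{ sol(ωᵢ) : sol(ωᵢ) ≤ λ } (the maximum solution among the satisfying samples). Then the μ^N-measure of the set of ω ∈ Ω^N such that either N_viol(ω) = N, or μ{ u ∈ Ω : sol(u) ≤ τ⁺(ω) } ≥ t*(N_viol(ω)), is at least β. (Lemma 2: with confidence at least β, a fresh sample u satisfies sol(u) ≤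 τ⁺ with probability at least t*(N_viol).) -/
open MeasureTheory


open Finset in

lemma sum_subsets_eq_binom {N k : ℕ} (hk : k < N) (x y : ℝ) :
    ∑ S ∈ (Finset.univ : Finset (Finset (Fin N))).filter (fun S => N - k ≤ S.card),
      x ^ S.card * y ^ (N - S.card)
    = ∑ i ∈ Finset.range (k+1), (N.choose i : ℝ) * y ^ i * x ^ (N - i) := by
  have hbU : (Finset.univ : Finset (Finset (Fin N))).filter (fun S => N - k ≤ S.card)
      = (Finset.range (k+1)).biUnion (fun i => Finset.powersetCard (N - i) Finset.univ) := by
    ext S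
    simp only [mem_filter, mem_univ, true_and, mem_biUnion, mem_range, mem_powersetCard,
      subset_univ, true_and]
    constructor
    · intro h
      refine ⟨N - S.card, ?_, ?_⟩
      · omega
      · have := S.card_le_univ
        simp at this
        omega
    · rintro ⟨i, hi, hc⟩
      omega
  rw [hbU, Finset.sum_biUnion]
  · apply Finset.sum_congr rfl
    intro i hi
    rw [Finset.mem_range] at hi
    have hiN : i ≤ N := by omega
    have : ∀ S ∈ Finset.powersetCard (N - i) (Finset.univ : Finset (Fin N)),
        x ^ S.card * y ^ (N - S.card) = (x ^ (N - i) * y ^ i) := by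
      intro S hS
      rw [Finset.mem_powersetCard] at hS
      rw [hS.2]
      congr 2
      omega
    rw [Finset.sum_congr rfl this, Finset.sum_const, Finset.card_powersetCard]
    simp [Nat.choose_symm hiN, Finset.card_univ]
    ring
  · intro a ha b hb hab
    simp only [Finset.mem_coe, Finset.mem_range] at ha hb
    apply Finset.disjoint_left.mpr
    intro S hSa hSb
    rw [Finset.mem_powersetCard] at hSa hSb
    exact hab (by omega)

open Finset in

lemma tail_hasDerivAt {N k : ℕ} (q : ℝ) :
    HasDerivAt (fun q : ℝ => ∑ i ∈ Finset.range (k+1),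
      (N.choose i : ℝ) * (1 - q) ^ i * q ^ (N - i))
      ((k+1) * (N.choose (k+1) : ℝ) * (1 - q) ^ k * q ^ (N - (k+1))) q := by
  have key : ∀ i : ℕ, HasDerivAt (fun q : ℝ => (N.choose i : ℝ) * (1 - q) ^ i * q ^ (N - i))
      (((N - i : ℕ) : ℝ) * (N.choose i : ℝ) * (1 - q) ^ i * q ^ (N - i - 1)
        - (i : ℝ) * (N.choose i : ℝ) * (1 - q) ^ (i - 1) * q ^ (N - i)) q := by
    intro i
    have h1 : HasDerivAt (fun q : ℝ => (1 - q) ^ i) (-(i * (1 - q) ^ (i - 1))) q := by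
      have := ((hasDerivAt_id q).const_sub 1).fun_pow i
      simpa using this
    have h2 : HasDerivAt (fun q : ℝ => q ^ (N - i)) ((N - i : ℕ) * q ^ (N - i - 1)) q :=
      hasDerivAt_pow (N - i) q
    have := ((h1.const_mul ((N.choose i : ℝ))).fun_mul h2)
    refine this.congr_deriv ?_
    ring
  have hsum : HasDerivAt (fun q : ℝ => ∑ i ∈ Finset.range (k+1), (N.choose i : ℝ) * (1 - q) ^ i * q ^ (N - i)) (∑ i ∈ Finset.range (k+1), (((N - i : ℕ) : ℝ) * (N.choose i : ℝ) * (1 - q) ^ i * q ^ (N - i - 1) - (i : ℝ) * (N.choose i : ℝ) * (1 - q) ^ (i - 1) * q ^ (N - i))) q := HasDerivAt.fun_sum (fun i _ => key i)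
  convert hsum using 1
  -- telescoping
  set u : ℕ → ℝ := fun i => (i : ℝ) * (N.choose i : ℝ) * (1 - q) ^ (i - 1) * q ^ (N - i) with hu
  have hshift : ∀ i, ((N - i : ℕ) : ℝ) * (N.choose i : ℝ) * (1 - q) ^ i * q ^ (N - i - 1)
      = u (i + 1) := by
    intro i
    simp only [hu]
    by_cases hiN : i < N
    · have hch : ((N.choose (i+1) : ℕ) : ℝ) * ((i+1 : ℕ) : ℝ) = (N.choose i : ℝ) * ((N - i : ℕ) : ℝ) := by
        rw [← Nat.cast_mul, ← Nat.cast_mul, Nat.choose_succ_right_eq]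
      have : (N - (i+1)) = N - i - 1 := by omega
      rw [this]
      simp only [Nat.add_sub_cancel]
      push_cast at hch ⊢
      linear_combination (-((1 - q) ^ i * q ^ (N - i - 1))) * hch
    · have h1 : N - i = 0 := by omega
      have h2 : N.choose (i+1) = 0 := Nat.choose_eq_zero_of_lt (by omega)
      simp [h1, h2]
  have : ∀ i ∈ Finset.range (k+1),
      ((N - i : ℕ) : ℝ) * (N.choose i : ℝ) * (1 - q) ^ i * q ^ (N - i - 1)
        - (i : ℝ) * (N.choose i : ℝ) * (1 - q) ^ (i - 1) * q ^ (N - i)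
      = u (i + 1) - u i := by
    intro i _
    rw [hshift i]
  rw [Finset.sum_congr rfl this, Finset.sum_range_sub u]
  simp only [hu]
  push_cast
  simp

lemma tail_monotoneOn {N k : ℕ} :
    MonotoneOn (fun q : ℝ => ∑ i ∈ Finset.range (k+1),
      (N.choose i : ℝ) * (1 - q) ^ i * q ^ (N - i)) (Set.Icc 0 1) := by
  apply monotoneOn_of_deriv_nonneg (convex_Icc 0 1)
  · apply Continuous.continuousOn
    apply continuous_finset_sum
    intro i _
    fun_prop
  · intro x _
    exact (tail_hasDerivAt x).differentiableAt.differentiableWithinAt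
  · intro x hx
    rw [interior_Icc, Set.mem_Ioo] at hx
    rw [(tail_hasDerivAt x).deriv]
    have h1 : (0:ℝ) ≤ 1 - x := by linarith [hx.2]
    have h2 : (0:ℝ) ≤ x := le_of_lt hx.1
    apply mul_nonneg
    apply mul_nonneg
    apply mul_nonneg
    · positivity
    · positivity
    · exact pow_nonneg h1 k
    · exact pow_nonneg h2 _


lemma pit_bound {Ω : Type*} [MeasurableSpace Ω] (μ : Measure Ω) [IsProbabilityMeasure μ]
    (sol : Ω → ℝ) {t : ℝ} (ht1 : t ≤ 1) :
    μ {u | (μ {v | sol v ≤ sol u}).toReal < t} ≤ ENNReal.ofReal t := by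
  set F : ℝ → ℝ := fun x => (μ {v | sol v ≤ x}).toReal with hF
  have hFmono : Monotone F := by
    intro x y hxy
    apply ENNReal.toReal_mono (measure_ne_top μ _)
    exact measure_mono (fun v hv => le_trans hv hxy)
  have hFle : ∀ x, μ {v | sol v ≤ x} = ENNReal.ofReal (F x) := by
    intro x
    rw [hF, ENNReal.ofReal_toReal (measure_ne_top μ _)]
  by_cases hlt : t < 1
  swap
  · -- t = 1
    have ht : t = 1 := le_antisymm ht1 (not_lt.mp hlt)
    calc μ _ ≤ μ Set.univ := measure_mono (Set.subset_univ _)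
    _ = 1 := measure_univ
    _ = ENNReal.ofReal t := by rw [ht]; simp
  -- find x₀ with t ≤ F x₀
  have hx0 : ∃ x₀ : ℝ, t ≤ F x₀ := by
    by_contra h
    push_neg at h
    have hU : (⋃ n : ℕ, {v | sol v ≤ (n:ℝ)}) = Set.univ := by
      ext v
      simp only [Set.mem_iUnion, Set.mem_setOf_eq, Set.mem_univ, iff_true]
      exact exists_nat_ge (sol v)
    have hmono : Monotone (fun n : ℕ => {v | sol v ≤ (n:ℝ)}) := by
      intro m n hmn v hv
      simp only [Set.mem_setOf_eq] at hv ⊢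
      exact le_trans hv (Nat.cast_le.mpr hmn)
    have := hmono.directed_le.measure_iUnion (μ := μ)
    rw [hU, measure_univ] at this
    have hle : ∀ n : ℕ, μ {v | sol v ≤ (n:ℝ)} ≤ ENNReal.ofReal t := by
      intro n
      rw [hFle]
      exact ENNReal.ofReal_le_ofReal (le_of_lt (h n))
    have h1 : (1 : ENNReal) ≤ ENNReal.ofReal t := this ▸ iSup_le hle
    have h2 : ENNReal.ofReal t < 1 := ENNReal.ofReal_lt_one.mpr hlt
    exact absurd h1 (not_le.mpr h2)
  obtain ⟨x₀, hx₀⟩ := hx0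
  set A : Set Ω := {u | F (sol u) < t} with hA
  by_cases hGne : (∃ x : ℝ, F x < t)
  swap
  · have : A = ∅ := by
      ext u
      simp only [hA, Set.mem_setOf_eq, Set.mem_empty_iff_false, iff_false]
      intro hu
      exact hGne ⟨sol u, hu⟩
    rw [this]
    simp
  set G : Set ℝ := {x | F x < t} with hG
  obtain ⟨xg, hxg⟩ := hGne
  have hGbdd : BddAbove G := by
    refine ⟨x₀, fun x hx => ?_⟩
    by_contra hc
    push_neg at hc
    exact absurd (lt_of_le_of_lt (le_trans hx₀ (hFmono (le_of_lt hc))) hx) (lt_irrefl t)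
  set c := sSup G with hc
  have hmemle : ∀ u, u ∈ A → sol u ≤ c := fun u hu => le_csSup hGbdd hu
  by_cases hcG : F c < t
  · calc μ A ≤ μ {v | sol v ≤ c} := measure_mono (fun u hu => hmemle u hu)
    _ = ENNReal.ofReal (F c) := hFle c
    _ ≤ ENNReal.ofReal t := ENNReal.ofReal_le_ofReal (le_of_lt hcG)
  · have hsub : A ⊆ {u | sol u < c} := by
      intro u hu
      have h1 := hmemle u hu
      rcases lt_or_eq_of_le h1 with h | h
      · exact h
      · exact absurd (h ▸ hu) hcG
    have hsub2 : {u | sol u < c} ⊆ ⋃ n : ℕ, {u | sol u ≤ c - 1/(n+1)} := by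
      intro u hu
      obtain ⟨n, hn⟩ := exists_nat_one_div_lt (show (0:ℝ) < c - sol u from sub_pos.mpr hu)
      exact Set.mem_iUnion.mpr ⟨n, by simp only [Set.mem_setOf_eq]; push_cast; push_cast at hn; linarith⟩
    have hmono2 : Monotone (fun n : ℕ => {u | sol u ≤ c - 1/((n:ℝ)+1)}) := by
      intro m n hmn u hu
      simp only [Set.mem_setOf_eq] at hu ⊢
      have hmn' : ((m:ℝ)) ≤ (n:ℝ) := Nat.cast_le.mpr hmn
      have : (1:ℝ)/((n:ℝ)+1) ≤ 1/((m:ℝ)+1) := by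
        apply one_div_le_one_div_of_le
        · positivity
        · linarith
      linarith
    have hun := hmono2.directed_le.measure_iUnion (μ := μ)
    calc μ A ≤ μ (⋃ n : ℕ, {u | sol u ≤ c - 1/((n:ℝ)+1)}) := measure_mono (le_trans hsub hsub2)
    _ = ⨆ n : ℕ, μ {u | sol u ≤ c - 1/((n:ℝ)+1)} := hun
    _ ≤ ENNReal.ofReal t := by
        apply iSup_le
        intro n
        rw [hFle]
        apply ENNReal.ofReal_le_ofReal
        have hlt2 : c - 1/((n:ℝ)+1) < c := by
          have : (0:ℝ) < 1/((n:ℝ)+1) := by positivity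
          linarith
        rw [hc] at hlt2
        obtain ⟨g, hgG, hgg⟩ := exists_lt_of_lt_csSup (Set.nonempty_of_mem (show xg ∈ G from hxg)) hlt2
        have hgt : F g < t := hgG
        exact le_of_lt (lt_of_le_of_lt (hFmono (le_of_lt hgg)) hgt)

/-- **Lemma 2.** With confidence at least `β`, a fresh sample `u` satisfies `sol u ≤ τ⁺`
with probability at least `t*(N_viol)`, where `τ⁺` is the maximum solution among the
samples satisfying the specification (well-defined whenever `N_viol < N`; here expressed
via `sSup`, which coincides with that maximum in this case). -/
theorem scenario_discarded_bound
    {Ω : Type*} [MeasurableSpace Ω] (μ : Measure Ω) [IsProbabilityMeasure μ]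
    (sol : Ω → ℝ) (hsol : Measurable sol)
    (N : ℕ) (hN : 1 ≤ N) (β : ℝ) (hβ : β ∈ Set.Ioo (0 : ℝ) 1) (lam : ℝ)
    (tstar : ℕ → ℝ)
    (htstar_mem : ∀ k, k ≤ N - 1 → tstar k ∈ Set.Icc (0 : ℝ) 1)
    (htstar_eq : ∀ k, k ≤ N - 1 →
      ∑ i ∈ Finset.range (k + 1),
        (N.choose i : ℝ) * (1 - tstar k) ^ i * (tstar k) ^ (N - i) = (1 - β) / N)
    (htstar_N : tstar N = 0) :
    ENNReal.ofReal β ≤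
      (Measure.pi (fun _ : Fin N => μ))
        {ω : Fin N → Ω |
          (Finset.univ.filter (fun i : Fin N => lam < sol (ω i))).card = N ∨
          tstar ((Finset.univ.filter (fun i : Fin N => lam < sol (ω i))).card) ≤
            (μ {u : Ω | sol u ≤
              sSup ((fun i : Fin N => sol (ω i)) ''
                {i : Fin N | sol (ω i) ≤ lam})}).toReal} := by
  classical
  set π := Measure.pi (fun _ : Fin N => μ) with hπ
  set F : ℝ → ℝ := fun x => (μ {v | sol v ≤ x}).toReal with hF
  have hFmono : Monotone F := by
    intro x y hxy
    apply ENNReal.toReal_mono (measure_ne_top μ _)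
    exact measure_mono (fun v hv => le_trans hv hxy)
  have hFmeas : Measurable F := hFmono.measurable
  set count : (Fin N → Ω) → ℕ :=
    fun ω => (Finset.univ.filter (fun i : Fin N => lam < sol (ω i))).card with hcount
  set tau : (Fin N → Ω) → ℝ :=
    fun ω => sSup ((fun i : Fin N => sol (ω i)) '' {i : Fin N | sol (ω i) ≤ lam}) with htau
  set good : Set (Fin N → Ω) :=
    {ω | count ω = N ∨ tstar (count ω) ≤ F (tau ω)} with hgood
  set bad : Set (Fin N → Ω) :=
    {ω | ¬(count ω = N) ∧ F (tau ω) < tstar (count ω)} with hbad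
  set A : ℕ → Set Ω := fun k => {u | F (sol u) < tstar k} with hA
  have hAmeas : ∀ k, MeasurableSet (A k) :=
    fun k => (hFmeas.comp hsol) measurableSet_Iio
  set cyl : ℕ → Finset (Fin N) → Set (Fin N → Ω) :=
    fun k S => Set.univ.pi (fun i => if i ∈ S then A k else (A k)ᶜ) with hcyl
  set 𝒮 : ℕ → Finset (Finset (Fin N)) :=
    fun k => (Finset.univ : Finset (Finset (Fin N))).filter (fun S => N - k ≤ S.card) with hS
  -- step 2 : bad ⊆ union of cylinders
  have hbad_sub : bad ⊆ ⋃ k ∈ Finset.range N, ⋃ S ∈ 𝒮 k, cyl k S := by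
    intro ω hω
    obtain ⟨hne, hltt⟩ := hω
    have hkN : count ω < N := by
      have : count ω ≤ N := by
        have := Finset.card_filter_le (Finset.univ : Finset (Fin N))
          (fun i : Fin N => lam < sol (ω i))
        simpa using this
      omega
    set k := count ω with hk
    refine Set.mem_biUnion (Finset.mem_range.mpr hkN) ?_
    set S := Finset.univ.filter (fun i : Fin N => F (sol (ω i)) < tstar k) with hSdef
    have hTS : Finset.univ.filter (fun i : Fin N => ¬ lam < sol (ω i)) ⊆ S := by
      intro i hi
      rw [Finset.mem_filter] at hi ⊢
      refine ⟨Finset.mem_univ _, ?_⟩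
      have hile : sol (ω i) ≤ lam := not_lt.mp hi.2
      have hmem : sol (ω i) ∈ ((fun i : Fin N => sol (ω i)) '' {i : Fin N | sol (ω i) ≤ lam}) :=
        ⟨i, hile, rfl⟩
      have hbdd : BddAbove ((fun i : Fin N => sol (ω i)) '' {i : Fin N | sol (ω i) ≤ lam}) :=
        (Set.toFinite _).bddAbove
      have : sol (ω i) ≤ tau ω := le_csSup hbdd hmem
      exact lt_of_le_of_lt (hFmono this) hltt
    have hcardT : (Finset.univ.filter (fun i : Fin N => ¬ lam < sol (ω i))).card = N - k := by
      have := Finset.card_filter_add_card_filter_not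
        (s := (Finset.univ : Finset (Fin N))) (fun i : Fin N => lam < sol (ω i))
      simp only [Finset.card_univ, Fintype.card_fin] at this
      have ha : (Finset.univ.filter (fun i : Fin N => lam < sol (ω i))).card = k := rfl
      omega
    have hcardS : N - k ≤ S.card := hcardT ▸ Finset.card_le_card hTS
    have hSin : S ∈ 𝒮 k := by
      rw [hS]
      simp only [Finset.mem_filter, Finset.mem_univ, true_and]
      exact hcardS
    refine Set.mem_biUnion hSin ?_
    · intro i _
      by_cases hiS : i ∈ S
      · simp only [hiS, if_pos]
        rw [hSdef] at hiS
        exact (Finset.mem_filter.mp hiS).2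
      · simp only [hiS, if_neg, not_false_iff]
        intro hcon
        exact hiS (Finset.mem_filter.mpr ⟨Finset.mem_univ _, hcon⟩)
  -- per-k bound
  have htk : ∀ k, k < N → tstar k ∈ Set.Icc (0:ℝ) 1 := fun k hk => htstar_mem k (by omega)
  have hbadk : ∀ k, k < N → π (⋃ S ∈ 𝒮 k, cyl k S) ≤ ENNReal.ofReal ((1-β)/N) := by
    intro k hkN
    set a : ℝ := (μ (A k)).toReal with ha
    have ha0 : 0 ≤ a := ENNReal.toReal_nonneg
    have hμA : μ (A k) = ENNReal.ofReal a := (ENNReal.ofReal_toReal (measure_ne_top μ _)).symm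
    have ha1 : a ≤ 1 := by
      calc a ≤ (1 : ENNReal).toReal := ENNReal.toReal_mono ENNReal.one_ne_top prob_le_one
      _ = 1 := by simp
    have hat : a ≤ tstar k := by
      have hb : μ (A k) ≤ ENNReal.ofReal (tstar k) := pit_bound μ sol (htk k hkN).2
      calc a ≤ (ENNReal.ofReal (tstar k)).toReal :=
          ENNReal.toReal_mono ENNReal.ofReal_ne_top hb
      _ = tstar k := ENNReal.toReal_ofReal (htk k hkN).1
    have hcompl : μ (A k)ᶜ = ENNReal.ofReal (1 - a) := by
      rw [measure_compl (hAmeas k) (measure_ne_top μ _), measure_univ, hμA,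
        ENNReal.ofReal_sub 1 ha0, ENNReal.ofReal_one]
    calc π (⋃ S ∈ 𝒮 k, cyl k S) ≤ ∑ S ∈ 𝒮 k, π (cyl k S) :=
        measure_biUnion_finset_le _ _
    _ = ∑ S ∈ 𝒮 k, ENNReal.ofReal (a ^ S.card * (1-a) ^ (N - S.card)) := by
        apply Finset.sum_congr rfl
        intro S _
        rw [hπ, hcyl, Measure.pi_pi]
        have hterm : ∀ i : Fin N, μ (if i ∈ S then A k else (A k)ᶜ)
            = if i ∈ S then ENNReal.ofReal a else ENNReal.ofReal (1-a) := by
          intro i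
          split
          · exact hμA
          · exact hcompl
        rw [Finset.prod_congr rfl (fun i _ => hterm i), Finset.prod_ite]
        have h1 : Finset.univ.filter (fun i : Fin N => i ∈ S) = S := by ext i; simp
        have h2 : Finset.univ.filter (fun i : Fin N => ¬ i ∈ S) = Sᶜ := by ext i; simp
        rw [h1, h2, Finset.prod_const, Finset.prod_const, Finset.card_compl]
        rw [ENNReal.ofReal_mul (by positivity), ENNReal.ofReal_pow ha0,
          ENNReal.ofReal_pow (by linarith)]
        simp [Fintype.card_fin]
    _ = ENNReal.ofReal (∑ S ∈ 𝒮 k, a ^ S.card * (1-a) ^ (N - S.card)) := by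
        rw [ENNReal.ofReal_sum_of_nonneg]
        intro S _
        have : (0:ℝ) ≤ 1 - a := by linarith
        positivity
    _ ≤ ENNReal.ofReal ((1-β)/N) := by
        apply ENNReal.ofReal_le_ofReal
        rw [hS]
        rw [sum_subsets_eq_binom hkN a (1-a)]
        have hmono := tail_monotoneOn (N := N) (k := k)
        have h1 : a ∈ Set.Icc (0:ℝ) 1 := ⟨ha0, ha1⟩
        have h2 : tstar k ∈ Set.Icc (0:ℝ) 1 := htk k hkN
        have := hmono h1 h2 hat
        simp only at this
        calc ∑ i ∈ Finset.range (k+1), (N.choose i : ℝ) * (1-a) ^ i * a ^ (N - i)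
            ≤ ∑ i ∈ Finset.range (k+1),
              (N.choose i : ℝ) * (1 - tstar k) ^ i * (tstar k) ^ (N - i) := this
        _ = (1-β)/N := htstar_eq k (by omega)
  -- total bad bound
  have hbadle : π bad ≤ ENNReal.ofReal (1 - β) := by
    calc π bad ≤ π (⋃ k ∈ Finset.range N, ⋃ S ∈ 𝒮 k, cyl k S) := measure_mono hbad_sub
    _ ≤ ∑ k ∈ Finset.range N, π (⋃ S ∈ 𝒮 k, cyl k S) := measure_biUnion_finset_le _ _
    _ ≤ ∑ k ∈ Finset.range N, ENNReal.ofReal ((1-β)/N) :=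
        Finset.sum_le_sum (fun k hk => hbadk k (Finset.mem_range.mp hk))
    _ = ENNReal.ofReal (1 - β) := by
        rw [Finset.sum_const, Finset.card_range, nsmul_eq_mul, ← ENNReal.ofReal_natCast,
          ← ENNReal.ofReal_mul (by positivity)]
        congr 1
        field_simp
  have hcover : (1 : ENNReal) ≤ π good + π bad := by
    have hsub : Set.univ ⊆ good ∪ bad := by
      intro ω _
      by_cases h1 : count ω = N
      · exact Or.inl (Or.inl h1)
      · by_cases h2 : tstar (count ω) ≤ F (tau ω)
        · exact Or.inl (Or.inr h2)
        · exact Or.inr ⟨h1, not_le.mp h2⟩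
    calc (1:ENNReal) = π Set.univ := measure_univ.symm
    _ ≤ π (good ∪ bad) := measure_mono hsub
    _ ≤ π good + π bad := measure_union_le _ _
  have hβ1 : ENNReal.ofReal β = 1 - ENNReal.ofReal (1-β) := by
    rw [← ENNReal.ofReal_one, ← ENNReal.ofReal_sub 1 (by linarith [hβ.2] : (0:ℝ) ≤ 1-β)]
    norm_num
  have hfinal : ENNReal.ofReal β ≤ π good := by
    rw [hβ1, tsub_le_iff_right]
    calc (1:ENNReal) ≤ π good + π bad := hcover
    _ ≤ π good + ENNReal.ofReal (1-β) := add_le_add_right hbadle _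
  exact hfinal
end

section
/- Fix integers N ≥ 1 and 0 ≤ k ≤ N−1. For ω ∈ Ω^N let τ_k(ω) denote the (k+1)-th largest value among sol(ω₁), …, sol(ω_N), counted with multiplicity (i.e., the maximum after discarding the k largest sample values). Then for every t ∈ [0,1], μ^N{ ω ∈ Ω^N : μ{ u ∈ Ω : sol(u) ≤ τ_k(ω) } < t } ≤ Σ_{i=0}^{k} (N choose i)·(1−t)^i·t^{N−i}. (This is the scenario bound with k discarded constraints, specialized to one decision variable, underlying Lemma 2.) -/
open MeasureTheory
open scoped ENNReal


lemma binom_term_deriv (N j : ℕ) (s : ℝ) :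
    HasDerivAt (fun s : ℝ => (N.choose j : ℝ) * (1-s)^j * s^(N-j))
      (((j+1 : ℕ) : ℝ) * (N.choose (j+1) : ℝ) * (1-s)^j * s^(N-(j+1))
        - (j : ℝ) * (N.choose j : ℝ) * (1-s)^(j-1) * s^(N-j)) s := by
  have h1 : HasDerivAt (fun s : ℝ => (1-s)^j) ((j:ℝ) * (1-s)^(j-1) * (-1)) s :=
    (((hasDerivAt_id s).const_sub 1).pow j)
  have h2 : HasDerivAt (fun s : ℝ => s^(N-j)) (((N-j : ℕ):ℝ) * s^(N-j-1)) s :=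
    hasDerivAt_pow (N-j) s
  have h3 := ((h1.mul h2).const_mul ((N.choose j : ℝ)))
  convert h3 using 1
  · rfl
  · rfl
  · funext y; simp only [Pi.mul_apply]; ring
  · have hc : ((N.choose (j+1) : ℝ)) * ((j+1 : ℕ) : ℝ) = (N.choose j : ℝ) * ((N - j : ℕ) : ℝ) :=
      by exact_mod_cast congrArg (Nat.cast : ℕ → ℝ) (Nat.choose_succ_right_eq N j)
    have hNj : N - (j+1) = (N - j) - 1 := by omega
    rw [hNj]
    linear_combination (1-s)^j * s^(N-j-1) * hc

lemma binomTail_mono (N k : ℕ) (hk : k + 1 ≤ N) :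
    MonotoneOn (fun s : ℝ => ∑ j ∈ Finset.range (k+1),
      (N.choose j : ℝ) * (1-s)^j * s^(N-j)) (Set.Icc 0 1) := by
  set a : ℝ → ℕ → ℝ := fun s j => (j : ℝ) * (N.choose j : ℝ) * (1-s)^(j-1) * s^(N-j) with ha
  have hder : ∀ s : ℝ, HasDerivAt (fun s : ℝ => ∑ j ∈ Finset.range (k+1),
      (N.choose j : ℝ) * (1-s)^j * s^(N-j)) (a s (k+1)) s := by
    intro s
    have h : HasDerivAt (fun s : ℝ => ∑ j ∈ Finset.range (k+1),
        (N.choose j : ℝ) * (1-s)^j * s^(N-j))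
        (∑ j ∈ Finset.range (k+1), (((j+1 : ℕ) : ℝ) * (N.choose (j+1) : ℝ) * (1-s)^j * s^(N-(j+1))
          - (j : ℝ) * (N.choose j : ℝ) * (1-s)^(j-1) * s^(N-j))) s :=
      HasDerivAt.fun_sum (fun j _ => binom_term_deriv N j s)
    have htel : ∑ j ∈ Finset.range (k+1), (a s (j+1) - a s j) = a s (k+1) - a s 0 :=
      Finset.sum_range_sub (a s) (k+1)
    have h0 : a s 0 = 0 := by simp [ha]
    have : ∀ j, a s (j+1) = ((j+1 : ℕ) : ℝ) * (N.choose (j+1) : ℝ) * (1-s)^j * s^(N-(j+1)) := by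
      intro j; simp only [ha, Nat.add_sub_cancel]
    simp only [this] at htel
    rw [htel, h0, sub_zero] at h
    exact h
  have hdiff : Differentiable ℝ (fun s : ℝ => ∑ j ∈ Finset.range (k+1),
      (N.choose j : ℝ) * (1-s)^j * s^(N-j)) := fun s => (hder s).differentiableAt
  apply monotoneOn_of_deriv_nonneg (convex_Icc 0 1) hdiff.continuous.continuousOn
    hdiff.differentiableOn
  intro x hx
  rw [interior_Icc] at hx
  rw [(hder x).deriv]
  have h1 : (0:ℝ) ≤ 1 - x := by linarith [hx.2]
  have h2 : (0:ℝ) ≤ x := le_of_lt hx.1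
  have : a x (k+1) = ((k+1 : ℕ) : ℝ) * (N.choose (k+1) : ℝ) * (1-x)^k * x^(N-(k+1)) := by
    simp [ha]
  rw [this]
  positivity


lemma cdf_lt_bound {Ω : Type*} [MeasurableSpace Ω] (μ : Measure Ω) [IsProbabilityMeasure μ]
    (sol : Ω → ℝ) (t : ℝ) (ht : 0 ≤ t) :
    μ {u | (μ {v | sol v ≤ sol u}).toReal < t} ≤ ENNReal.ofReal t := by
  set B : Set ℝ := {x | (μ {v | sol v ≤ x}).toReal < t} with hB
  have hdown : ∀ ⦃x y : ℝ⦄, x ≤ y → y ∈ B → x ∈ B := by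
    intro x y hxy hy
    exact lt_of_le_of_lt (ENNReal.toReal_mono (measure_ne_top μ _)
      (measure_mono (fun v (hv : sol v ≤ x) => le_trans hv hxy))) hy
  have hle : ∀ x ∈ B, μ {v | sol v ≤ x} ≤ ENNReal.ofReal t := by
    intro x hx
    exact (ENNReal.le_ofReal_iff_toReal_le (measure_ne_top μ _) ht).mpr (le_of_lt hx)
  have hset : {u | (μ {v | sol v ≤ sol u}).toReal < t} = sol ⁻¹' B := rfl
  rw [hset]
  by_cases hmax : ∃ b ∈ B, ∀ x ∈ B, x ≤ b
  · obtain ⟨b, hbB, hbub⟩ := hmax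
    calc μ (sol ⁻¹' B) ≤ μ {v | sol v ≤ b} :=
          measure_mono (fun v hv => hbub _ hv)
      _ ≤ ENNReal.ofReal t := hle b hbB
  · push_neg at hmax
    have hsub : sol ⁻¹' B ⊆ ⋃ q : {q : ℚ // (q : ℝ) ∈ B}, {v | sol v ≤ (q : ℝ)} := by
      intro v hv
      obtain ⟨y, hyB, hy⟩ := hmax _ hv
      obtain ⟨q, hq1, hq2⟩ := exists_rat_btwn hy
      exact Set.mem_iUnion.mpr ⟨⟨q, hdown (le_of_lt hq2) hyB⟩, le_of_lt hq1⟩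
    refine le_trans (measure_mono hsub) ?_
    rw [Directed.measure_iUnion ?_]
    · exact iSup_le fun q => hle _ q.2
    · intro q1 q2
      rcases le_total (q1 : ℚ) (q2 : ℚ) with h | h
      · exact ⟨q2, fun v (hv : sol v ≤ (q1:ℝ)) =>
          le_trans hv (show ((q1:ℚ):ℝ) ≤ ((q2:ℚ):ℝ) by exact_mod_cast h), fun v hv => hv⟩
      · exact ⟨q1, fun v hv => hv, fun v (hv : sol v ≤ (q2:ℝ)) =>
          le_trans hv (show ((q2:ℚ):ℝ) ≤ ((q1:ℚ):ℝ) by exact_mod_cast h)⟩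

/-- Scenario bound with `k` discarded constraints (one decision variable): letting
`τ_k(ω)` be the `(k+1)`-th largest value among `sol (ω₁), …, sol (ω_N)` counted with
multiplicity (i.e., entry `N-1-k` of the ascending sort), the probability that
`μ {u | sol u ≤ τ_k ω} < t` is at most `∑_{i=0}^{k} (N choose i) (1-t)^i t^(N-i)`. -/
theorem scenario_discard_tail_bound
    {Ω : Type*} [MeasurableSpace Ω] (μ : Measure Ω) [IsProbabilityMeasure μ]
    (sol : Ω → ℝ) (hsol : Measurable sol)
    (N : ℕ) (hN : 1 ≤ N) (k : ℕ) (hk : k ≤ N - 1)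
    (t : ℝ) (ht : t ∈ Set.Icc (0 : ℝ) 1) :
    (Measure.pi (fun _ : Fin N => μ))
        {ω : Fin N → Ω |
          (μ {u : Ω | sol u ≤
            (((Finset.univ.val : Multiset (Fin N)).map
                (fun i : Fin N => sol (ω i))).sort (· ≤ ·)).getD (N - 1 - k) 0}).toReal
            < t}
      ≤ ENNReal.ofReal
          (∑ i ∈ Finset.range (k + 1),
            (N.choose i : ℝ) * (1 - t) ^ i * t ^ (N - i)) := by
  classical
  obtain ⟨ht0, ht1⟩ := ht
  have hkN : k + 1 ≤ N := by omega
  set A : Set Ω := {u | (μ {v | sol v ≤ sol u}).toReal < t} with hA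
  have hAmeas : MeasurableSet A := by
    have hord : ({x : ℝ | (μ {v | sol v ≤ x}).toReal < t}).OrdConnected := by
      constructor
      intro x hx y hy z hz
      exact lt_of_le_of_lt (ENNReal.toReal_mono (measure_ne_top μ _)
        (measure_mono (fun v (hv : sol v ≤ z) => le_trans hv hz.2))) hy
    exact hsol hord.measurableSet
  set B : Finset (Fin N) → Set (Fin N → Ω) :=
    fun S => Set.pi Set.univ (fun i => if i ∈ S then Aᶜ else A) with hBdef
  set I : Finset (Finset (Fin N)) :=
    (Finset.range (k+1)).biUnion (fun j => Finset.powersetCard j Finset.univ) with hI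
  -- inclusion
  have hincl : {ω : Fin N → Ω |
          (μ {u : Ω | sol u ≤
            (((Finset.univ.val : Multiset (Fin N)).map
                (fun i : Fin N => sol (ω i))).sort (· ≤ ·)).getD (N - 1 - k) 0}).toReal
            < t} ⊆ ⋃ S ∈ I, B S := by
    intro ω hω
    set τ : ℝ := (((Finset.univ.val : Multiset (Fin N)).map
                (fun i : Fin N => sol (ω i))).sort (· ≤ ·)).getD (N - 1 - k) 0 with hτ
    have hωτ : (μ {u : Ω | sol u ≤ τ}).toReal < t := hω
    set l : List ℝ := ((Finset.univ.val : Multiset (Fin N)).map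
                (fun i : Fin N => sol (ω i))).sort (· ≤ ·) with hl
    have hlen : l.length = N := by
      rw [hl, Multiset.length_sort, Multiset.card_map]
      simp
    have hidx : N - 1 - k < l.length := by omega
    have hsorted : l.Pairwise (· ≤ ·) := Multiset.pairwise_sort _ _
    have hτget : τ = l.get ⟨N - 1 - k, hidx⟩ := by
      rw [hτ, List.getD_eq_getElem l 0 hidx]
      simp [List.get_eq_getElem]
    -- count of small values
    have hcount : N - k ≤ (Finset.univ.filter (fun i => sol (ω i) ≤ τ)).card := by
      have e1 : Multiset.countP (fun x => x ≤ τ) ((l : Multiset ℝ))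
          = l.countP (fun x => decide (x ≤ τ)) := Multiset.coe_countP _ l
      have e2 : ((l : Multiset ℝ)) = (Finset.univ.val.map (fun i : Fin N => sol (ω i))) := by
        rw [hl]; exact Multiset.sort_eq _ _
      have h1 : (Finset.univ.filter (fun i => sol (ω i) ≤ τ)).card
          = l.countP (fun x => decide (x ≤ τ)) := by
        rw [← e1, e2, Multiset.countP_map]
        rfl
      rw [h1]
      have h2 : (l.take (N-k)).countP (fun x => decide (x ≤ τ)) ≤
          l.countP (fun x => decide (x ≤ τ)) :=
        (l.take_sublist (N-k)).countP_le
      have h3 : (l.take (N-k)).countP (fun x => decide (x ≤ τ)) = (l.take (N-k)).length := by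
        rw [List.countP_eq_length]
        intro a ha
        obtain ⟨m, hm, rfl⟩ := List.mem_take_iff_getElem.mp ha
        simp only [decide_eq_true_eq]
        have hm2 : m < l.length := lt_of_lt_of_le hm (min_le_right _ _)
        have hm' : m < N - k := lt_of_lt_of_le hm (min_le_left _ _)
        rw [hτget]
        have := hsorted.rel_get_of_le
          (a := ⟨m, hm2⟩) (b := ⟨N - 1 - k, hidx⟩) (by simp [Fin.le_def]; omega)
        simpa [List.get_eq_getElem] using this
      have h4 : (l.take (N-k)).length = N - k := by
        rw [List.length_take, hlen]; omega
      omega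
    have hsubA : ∀ i : Fin N, sol (ω i) ≤ τ → ω i ∈ A := by
      intro i hi
      show (μ {v | sol v ≤ sol (ω i)}).toReal < t
      exact lt_of_le_of_lt (ENNReal.toReal_mono (measure_ne_top μ _)
        (measure_mono (fun v (hv : sol v ≤ sol (ω i)) => le_trans hv hi))) hωτ
    have hcard2 : N - k ≤ (Finset.univ.filter (fun i => ω i ∈ A)).card := by
      refine le_trans hcount (Finset.card_le_card ?_)
      intro i hi
      simp only [Finset.mem_filter, Finset.mem_univ, true_and] at hi ⊢
      exact hsubA i hi
    set S : Finset (Fin N) := Finset.univ.filter (fun i => ω i ∉ A) with hS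
    have hsubc : S ⊆ (Finset.univ.filter (fun i => ω i ∈ A))ᶜ := by
      intro i hi
      rw [Finset.mem_compl]
      intro hmem
      exact (Finset.mem_filter.mp hi).2 (Finset.mem_filter.mp hmem).2
    have hScard : S.card ≤ k := by
      have h1 := Finset.card_le_card hsubc
      rw [Finset.card_compl, Fintype.card_fin] at h1
      have h2 := Finset.card_filter_le (Finset.univ : Finset (Fin N)) (fun i => ω i ∈ A)
      omega
    refine Set.mem_biUnion (show S ∈ I from ?_) ?_
    · rw [hI]
      exact Finset.mem_biUnion.mpr ⟨S.card, Finset.mem_range.mpr (by omega),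
        Finset.mem_powersetCard_univ.mpr rfl⟩
    · rw [hBdef]
      refine Set.mem_univ_pi.mpr fun i => ?_
      by_cases hiS : i ∈ S
      · simp only [hiS, if_true]
        exact (Finset.mem_filter.mp hiS).2
      · simp only [hiS, if_false]
        by_contra hcon
        exact hiS (Finset.mem_filter.mpr ⟨Finset.mem_univ i, hcon⟩)
  -- measure bound
  refine le_trans (measure_mono hincl) ?_
  refine le_trans (measure_biUnion_finset_le I B) ?_
  have hBS : ∀ S : Finset (Fin N),
      (Measure.pi (fun _ : Fin N => μ)) (B S) = (μ Aᶜ)^(S.card) * (μ A)^(N - S.card) := by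
    intro S
    rw [hBdef, Measure.pi_pi]
    simp only [apply_ite μ]
    rw [Finset.prod_ite (fun _ => μ Aᶜ) (fun _ => μ A), Finset.prod_const, Finset.prod_const]
    have h1 : (Finset.univ.filter (fun i => i ∈ S)).card = S.card := by
      simp [Finset.filter_mem_eq_inter]
    have h2 : (Finset.univ.filter (fun i => ¬ i ∈ S)).card = N - S.card := by
      have hsplit := Finset.card_filter_add_card_filter_not
        (s := (Finset.univ : Finset (Fin N))) (p := fun i => i ∈ S)
      have hcu : (Finset.univ : Finset (Fin N)).card = N := by simp
      omega
    rw [h1, h2]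
  have hsum : ∑ S ∈ I, (Measure.pi (fun _ : Fin N => μ)) (B S)
      = ∑ j ∈ Finset.range (k+1), (N.choose j : ℝ≥0∞) * ((μ Aᶜ)^j * (μ A)^(N-j)) := by
    rw [hI, Finset.sum_biUnion]
    · refine Finset.sum_congr rfl fun j hj => ?_
      have hc : ∀ S ∈ Finset.powersetCard j (Finset.univ : Finset (Fin N)),
          (Measure.pi (fun _ : Fin N => μ)) (B S) = (μ Aᶜ)^j * (μ A)^(N-j) := by
        intro S hSmem
        have hcard : S.card = j := (Finset.mem_powersetCard.mp hSmem).2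
        rw [hBS, hcard]
      rw [Finset.sum_congr rfl hc, Finset.sum_const, Finset.card_powersetCard,
        Finset.card_univ, Fintype.card_fin, nsmul_eq_mul]
    · intro j1 hj1 j2 hj2 hne
      simp only [Function.onFun]
      refine Finset.disjoint_left.mpr fun S hS1 hS2 => ?_
      have h1 : S.card = j1 := (Finset.mem_powersetCard.mp hS1).2
      have h2 : S.card = j2 := (Finset.mem_powersetCard.mp hS2).2
      exact hne (by omega)
  rw [hsum]
  -- convert to real
  set pr : ℝ := (μ A).toReal with hpr
  have hprt : pr ≤ t := ENNReal.toReal_le_of_le_ofReal ht0 (by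
    rw [hA]; exact cdf_lt_bound μ sol t ht0)
  have hpr0 : 0 ≤ pr := ENNReal.toReal_nonneg
  have hpr1 : pr ≤ 1 := by
    rw [hpr]
    exact ENNReal.toReal_le_of_le_ofReal zero_le_one (by simpa using prob_le_one (μ := μ) (s := A))
  have hpA : μ A = ENNReal.ofReal pr := (ENNReal.ofReal_toReal (measure_ne_top μ A)).symm
  have hpAc : μ Aᶜ = ENNReal.ofReal (1 - pr) := by
    rw [prob_compl_eq_one_sub hAmeas, hpA, ← ENNReal.ofReal_one, ← ENNReal.ofReal_sub _ hpr0]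
  have hconv : ∑ j ∈ Finset.range (k+1), (N.choose j : ℝ≥0∞) * ((μ Aᶜ)^j * (μ A)^(N-j))
      = ENNReal.ofReal (∑ j ∈ Finset.range (k+1),
          (N.choose j : ℝ) * (1-pr)^j * pr^(N-j)) := by
    rw [ENNReal.ofReal_sum_of_nonneg]
    · refine Finset.sum_congr rfl fun j hj => ?_
      have hq : (0:ℝ) ≤ 1 - pr := by linarith
      rw [hpA, hpAc, ← ENNReal.ofReal_pow hq, ← ENNReal.ofReal_pow hpr0,
        ← ENNReal.ofReal_mul (pow_nonneg hq j), ← ENNReal.ofReal_natCast (N.choose j),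
        ← ENNReal.ofReal_mul (Nat.cast_nonneg _), mul_assoc]
    · intro j hj
      have h1 : (0:ℝ) ≤ 1 - pr := by linarith
      positivity
  rw [hconv]
  exact ENNReal.ofReal_le_ofReal
    (binomTail_mono N k hkN ⟨hpr0, hpr1⟩ ⟨ht0, ht1⟩ hprt)
end

section
/- Let N ≥ 1 be an integer, β ∈ (0,1), and let 0 ≤ k₁ < k₂ ≤ N−1 be integers. If t₁, t₂ ∈ [0,1] satisfy Σ_{i=0}^{k₁} (N choose i)·(1−t₁)^i·t₁^{N−i} = (1−β)/N and Σ_{i=0}^{k₂} (N choose i)·(1−t₂)^i·t₂^{N−i} = (1−β)/N, then t₂ < t₁. (The lower bound t*(k) on the satisfaction probability strictly decreases as the number k of violating samples increases.) -/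
open Finset

private lemma hasDerivAt_term (c : ℝ) (i m : ℕ) (t : ℝ) :
    HasDerivAt (fun t : ℝ => c * (1 - t) ^ i * t ^ m)
      (c * ((m : ℝ) * t ^ (m - 1) * (1 - t) ^ i
        - (i : ℝ) * (1 - t) ^ (i - 1) * t ^ m)) t := by
  have h1 : HasDerivAt (fun t : ℝ => (1 - t) ^ i)
      ((i : ℝ) * (1 - t) ^ (i - 1) * (0 - 1)) t :=
    ((hasDerivAt_const t (1 : ℝ)).sub (hasDerivAt_id t)).pow i
  have h2 : HasDerivAt (fun t : ℝ => t ^ m) ((m : ℝ) * t ^ (m - 1)) t :=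
    hasDerivAt_pow m t
  have := (h1.const_mul c).mul h2
  refine this.congr_deriv (Eq.symm ?_)
  ring

private lemma hasDerivAt_sum (N k : ℕ) (hk : k + 1 ≤ N) (t : ℝ) :
    HasDerivAt (fun t : ℝ => ∑ i ∈ Finset.range (k + 1),
        (N.choose i : ℝ) * (1 - t) ^ i * t ^ (N - i))
      ((N.choose k : ℝ) * ((N - k : ℕ) : ℝ) * (1 - t) ^ k * t ^ (N - 1 - k)) t := by
  induction k with
  | zero =>
      simp only [zero_add, Finset.sum_range_one]
      have := hasDerivAt_term (N.choose 0 : ℝ) 0 (N - 0) t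
      convert this using 1
      simp only [Nat.sub_zero, pow_zero, Nat.cast_zero, zero_mul, mul_one, sub_zero]
      ring
  | succ k ih =>
      have hk' : k + 1 ≤ N := by omega
      have IH := ih hk'
      have hterm := hasDerivAt_term (N.choose (k + 1) : ℝ) (k + 1) (N - (k + 1)) t
      have := IH.add hterm
      have hfun : (fun t : ℝ => ∑ i ∈ Finset.range (k + 1 + 1),
          (N.choose i : ℝ) * (1 - t) ^ i * t ^ (N - i))
          = (fun t : ℝ => (∑ i ∈ Finset.range (k + 1),
          (N.choose i : ℝ) * (1 - t) ^ i * t ^ (N - i))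
          + (N.choose (k + 1) : ℝ) * (1 - t) ^ (k + 1) * t ^ (N - (k + 1))) := by
        funext t
        rw [Finset.sum_range_succ]
      rw [hfun]
      refine this.congr_deriv (Eq.symm ?_)
      obtain ⟨n, hn⟩ : ∃ n, N = k + 2 + n := ⟨N - (k + 2), by omega⟩
      subst hn
      have e1 : k + 2 + n - (k + 1) = n + 1 := by omega
      have e2 : k + 2 + n - 1 - (k + 1) = n := by omega
      have e3 : k + 2 + n - k = n + 2 := by omega
      have e4 : k + 2 + n - 1 - k = n + 1 := by omega
      have e5 : k + 1 - 1 = k := by omega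
      have e6 : n + 1 - 1 = n := by omega
      rw [e1, e2, e3, e4, e5, e6]
      have hchoose : ((k + 2 + n).choose (k + 1) : ℝ) * ((k + 1 : ℕ) : ℝ)
          = ((k + 2 + n).choose k : ℝ) * ((k + 2 + n - k : ℕ) : ℝ) := by
        rw [← Nat.cast_mul, ← Nat.cast_mul, Nat.choose_succ_right_eq]
      rw [e3] at hchoose
      push_cast at hchoose ⊢
      linear_combination ((1 - t) ^ k * t ^ (n + 1)) * hchoose

private lemma sum_strictMonoOn (N k : ℕ) (hk : k + 1 ≤ N) :
    StrictMonoOn (fun t : ℝ => ∑ i ∈ Finset.range (k + 1),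
        (N.choose i : ℝ) * (1 - t) ^ i * t ^ (N - i)) (Set.Icc 0 1) := by
  apply strictMonoOn_of_deriv_pos (convex_Icc 0 1)
  · exact Continuous.continuousOn
      (Differentiable.continuous (fun t => (hasDerivAt_sum N k hk t).differentiableAt))
  · intro x hx
    rw [interior_Icc] at hx
    rw [(hasDerivAt_sum N k hk x).deriv]
    have h1 : (0 : ℝ) < (N.choose k : ℝ) :=
      Nat.cast_pos.mpr (Nat.choose_pos (by omega))
    have h2 : (0 : ℝ) < ((N - k : ℕ) : ℝ) :=
      Nat.cast_pos.mpr (by omega)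
    have h3 : (0 : ℝ) < 1 - x := by linarith [hx.2]
    have h4 : (0 : ℝ) < x := hx.1
    positivity

/-- The lower bound `t*(k)` on the satisfaction probability strictly decreases as the
number `k` of violating samples increases. -/
theorem tstar_antitone_in_k
    (N : ℕ) (hN : 1 ≤ N) (β : ℝ) (hβ : β ∈ Set.Ioo (0 : ℝ) 1)
    (k₁ k₂ : ℕ) (hk₁ : k₁ < k₂) (hk₂ : k₂ ≤ N - 1)
    (t₁ t₂ : ℝ) (ht₁ : t₁ ∈ Set.Icc (0 : ℝ) 1) (ht₂ : t₂ ∈ Set.Icc (0 : ℝ) 1)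
    (h₁ : ∑ i ∈ Finset.range (k₁ + 1),
      (N.choose i : ℝ) * (1 - t₁) ^ i * t₁ ^ (N - i) = (1 - β) / N)
    (h₂ : ∑ i ∈ Finset.range (k₂ + 1),
      (N.choose i : ℝ) * (1 - t₂) ^ i * t₂ ^ (N - i) = (1 - β) / N) :
    t₂ < t₁ := by
  obtain ⟨hβ0, hβ1⟩ := hβ
  have hNpos : (0 : ℝ) < N := by exact_mod_cast hN
  have hc0 : (0 : ℝ) < (1 - β) / N := div_pos (by linarith) hNpos
  have hc1 : (1 - β) / N < 1 := by
    rw [div_lt_one hNpos]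
    have : (1 : ℝ) ≤ N := by exact_mod_cast hN
    linarith
  obtain ⟨ht₂0, ht₂1⟩ := ht₂
  -- t₂ > 0
  have ht₂pos : 0 < t₂ := by
    rcases ht₂0.eq_or_lt with h | h
    · exfalso
      rw [← h] at h₂
      have : (∑ i ∈ Finset.range (k₂ + 1),
          (N.choose i : ℝ) * (1 - 0) ^ i * (0:ℝ) ^ (N - i)) = 0 := by
        apply Finset.sum_eq_zero
        intro i hi
        rw [Finset.mem_range] at hi
        have : N - i ≠ 0 := by omega
        rw [zero_pow this]
        ring
      linarith [h₂ ▸ this]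
    · exact h
  -- t₂ < 1
  have ht₂lt1 : t₂ < 1 := by
    rcases ht₂1.eq_or_lt with h | h
    · exfalso
      rw [h] at h₂
      have : (∑ i ∈ Finset.range (k₂ + 1),
          (N.choose i : ℝ) * (1 - 1) ^ i * (1:ℝ) ^ (N - i)) = 1 := by
        rw [Finset.sum_eq_single_of_mem 0 (by simp)]
        · simp
        · intro i _ hi
          simp [sub_self, zero_pow hi]
      linarith [h₂ ▸ this]
    · exact h
  -- S k₁ t₂ < S k₂ t₂
  have key : (∑ i ∈ Finset.range (k₁ + 1),
      (N.choose i : ℝ) * (1 - t₂) ^ i * t₂ ^ (N - i))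
      < ∑ i ∈ Finset.range (k₂ + 1),
      (N.choose i : ℝ) * (1 - t₂) ^ i * t₂ ^ (N - i) := by
    apply Finset.sum_lt_sum_of_subset
      (Finset.range_subset_range.mpr (by omega)) (Finset.self_mem_range_succ k₂)
      (by simp; omega)
    · have h1 : (0 : ℝ) < (N.choose k₂ : ℝ) :=
        Nat.cast_pos.mpr (Nat.choose_pos (by omega))
      have h3 : (0 : ℝ) < 1 - t₂ := by linarith
      positivity
    · intro j _ _
      have h3 : (0 : ℝ) ≤ 1 - t₂ := by linarith
      positivity
  rw [h₂] at key
  by_contra hcon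
  push_neg at hcon
  have hmono := (sum_strictMonoOn N k₁ (by omega)).monotoneOn ht₁ ⟨ht₂0, ht₂1⟩ hcon
  rw [h₁] at hmono
  linarith
end

section
/- Fix an integer N ≥ 1, a confidence probability β ∈ (0,1), a threshold λ ∈ ℝ, and numbers t*(k) as in the context. For ω ∈ Ω^N let N_sat(ω) = #{ i ∈ {1,…,N} : sol(ωᵢ) ≤ λ } be the number of samples satisfying the specification. Then μ^N{ ω ∈ Ω^N : μ{ u ∈ Ω : sol(u) ≤ λ } ≤ 1 − t*(N_sat(ω)) } ≥ β. (Remark 1: applying Theorem 2 to the negated specification sol(u) > λ yields, with confidence at least β, an upper bound 1 − t*(N_sat) on the satisfaction probability.) -/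
open MeasureTheory
open scoped ENNReal

/-- The CDF-like binomial sum has derivative given by the telescoped value. -/
lemma binomCDF_hasDerivAt (N k : ℕ) (p : ℝ) :
    HasDerivAt (fun x : ℝ => ∑ i ∈ Finset.range (k + 1),
      (N.choose i : ℝ) * x ^ i * (1 - x) ^ (N - i))
      (-((N.choose (k + 1) : ℝ) * (k + 1) * p ^ k * (1 - p) ^ (N - (k + 1)))) p := by
  set g : ℕ → ℝ := fun j => (N.choose j : ℝ) * j * p ^ (j - 1) * (1 - p) ^ (N - j) with hg
  have key : ∀ i, HasDerivAt (fun x : ℝ => (N.choose i : ℝ) * x ^ i * (1 - x) ^ (N - i))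
      (g i - g (i + 1)) p := by
    intro i
    have h1 : HasDerivAt (fun x : ℝ => x ^ i) ((i : ℝ) * p ^ (i - 1)) p := hasDerivAt_pow i p
    have hinner : HasDerivAt (fun x : ℝ => 1 - x) (-1) p := (hasDerivAt_id p).const_sub 1
    have h2 : HasDerivAt (fun x : ℝ => (1 - x) ^ (N - i))
        (((N - i : ℕ) : ℝ) * (1 - p) ^ (N - i - 1) * (-1)) p := by
      simpa [Function.comp_def] using (hasDerivAt_pow (N - i) (1 - p)).comp p hinner
    have h3 := (h1.fun_mul h2).const_mul ((N.choose i : ℝ))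
    have hfun : (fun x : ℝ => (N.choose i : ℝ) * (x ^ i * (1 - x) ^ (N - i)))
        = fun x : ℝ => (N.choose i : ℝ) * x ^ i * (1 - x) ^ (N - i) := by
      funext x; ring
    rw [hfun] at h3
    refine h3.congr_deriv (Eq.symm ?_)
    have hcast : ((N.choose (i + 1) : ℝ)) * ((i : ℝ) + 1) = (N.choose i : ℝ) * ((N - i : ℕ) : ℝ) := by
      have := Nat.choose_succ_right_eq N i
      exact_mod_cast congrArg (fun n : ℕ => (n : ℝ)) this
    have hsub : N - (i + 1) = N - i - 1 := by omega
    simp only [hg, hsub, Nat.add_sub_cancel]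
    push_cast
    linear_combination (-(p ^ i * (1 - p) ^ (N - i - 1))) * hcast
  have hsum := HasDerivAt.fun_sum (fun i (_ : i ∈ Finset.range (k + 1)) => key i)
  have htel : ∑ i ∈ Finset.range (k + 1), (g i - g (i + 1)) = g 0 - g (k + 1) :=
    Finset.sum_range_sub' g (k + 1)
  rw [htel] at hsum
  have hg0 : g 0 = 0 := by simp [hg]
  rw [hg0, zero_sub] at hsum
  refine hsum.congr_deriv (Eq.symm ?_)
  simp only [hg]
  push_cast
  ring_nf

lemma binomCDF_antitoneOn (N k : ℕ) :
    AntitoneOn (fun x : ℝ => ∑ i ∈ Finset.range (k + 1),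
      (N.choose i : ℝ) * x ^ i * (1 - x) ^ (N - i)) (Set.Icc (0 : ℝ) 1) := by
  apply antitoneOn_of_deriv_nonpos (convex_Icc 0 1)
  · exact fun x _ => ((binomCDF_hasDerivAt N k x).differentiableAt).continuousAt.continuousWithinAt
  · exact fun x _ => ((binomCDF_hasDerivAt N k x).differentiableAt).differentiableWithinAt
  · intro x hx
    rw [interior_Icc] at hx
    rw [(binomCDF_hasDerivAt N k x).deriv]
    have h1 : (0 : ℝ) ≤ x := le_of_lt hx.1
    have h2 : (0 : ℝ) ≤ 1 - x := by linarith [hx.2]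
    have : (0 : ℝ) ≤ (N.choose (k + 1) : ℝ) * (k + 1) * x ^ k * (1 - x) ^ (N - (k + 1)) := by
      positivity
    linarith

/-- **Remark 1.** Applying Theorem 2 to the negated specification `sol u > lam` yields,
with confidence at least `β`, an upper bound `1 − t*(N_sat)` on the satisfaction
probability, where `N_sat` is the number of satisfying samples. -/
theorem scenario_upper_bound
    {Ω : Type*} [MeasurableSpace Ω] (μ : Measure Ω) [IsProbabilityMeasure μ]
    (sol : Ω → ℝ) (hsol : Measurable sol)
    (N : ℕ) (hN : 1 ≤ N) (β : ℝ) (hβ : β ∈ Set.Ioo (0 : ℝ) 1) (lam : ℝ)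
    (tstar : ℕ → ℝ)
    (htstar_mem : ∀ k, k ≤ N - 1 → tstar k ∈ Set.Icc (0 : ℝ) 1)
    (htstar_eq : ∀ k, k ≤ N - 1 →
      ∑ i ∈ Finset.range (k + 1),
        (N.choose i : ℝ) * (1 - tstar k) ^ i * (tstar k) ^ (N - i) = (1 - β) / N)
    (htstar_N : tstar N = 0) :
    ENNReal.ofReal β ≤
      (Measure.pi (fun _ : Fin N => μ))
        {ω : Fin N → Ω |
          (μ {u : Ω | sol u ≤ lam}).toReal ≤
            1 - tstar ((Finset.univ.filter (fun i : Fin N => sol (ω i) ≤ lam)).card)} := by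
  classical
  set π := (Measure.pi fun _ : Fin N => μ) with hπ
  have hπprob : IsProbabilityMeasure π := by rw [hπ]; infer_instance
  set A : Set Ω := {u | sol u ≤ lam} with hAdef
  have hAm : MeasurableSet A := measurableSet_le hsol measurable_const
  set p : ℝ := (μ A).toReal with hpdef
  have hμA_ne : μ A ≠ ⊤ := measure_ne_top μ A
  have hμA_le : μ A ≤ 1 := prob_le_one
  have hp0 : 0 ≤ p := ENNReal.toReal_nonneg
  have hp1 : p ≤ 1 := by
    rw [hpdef]
    calc (μ A).toReal ≤ (1 : ℝ≥0∞).toReal := ENNReal.toReal_mono (by simp) hμA_le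
    _ = 1 := by simp
  have hμA : μ A = ENNReal.ofReal p := (ENNReal.ofReal_toReal hμA_ne).symm
  have hμAc : μ Aᶜ = ENNReal.ofReal (1 - p) := by
    rw [measure_compl hAm hμA_ne, measure_univ, hμA,
      ← ENNReal.ofReal_one, ← ENNReal.ofReal_sub 1 hp0]
  -- events
  set E : Finset (Fin N) → Set (Fin N → Ω) := fun S =>
    {ω | Finset.univ.filter (fun i => sol (ω i) ≤ lam) = S} with hEdef
  have hE_eq : ∀ S, E S = Set.pi Set.univ (fun i => if i ∈ S then A else Aᶜ) := by
    intro S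
    ext ω
    simp only [hEdef, Set.mem_setOf_eq, Set.mem_pi, Set.mem_univ, forall_true_left,
      Finset.ext_iff, Finset.mem_filter, Finset.mem_univ, true_and]
    refine forall_congr' fun i => ?_
    by_cases hi : i ∈ S <;> simp [hi, hAdef]
  have hEm : ∀ S, MeasurableSet (E S) := by
    intro S
    rw [hE_eq]
    exact MeasurableSet.univ_pi fun i => by
      by_cases hi : i ∈ S <;> simp [hi, hAm, hAm.compl]
  have hEμ : ∀ S : Finset (Fin N),
      π (E S) = ENNReal.ofReal p ^ S.card * ENNReal.ofReal (1 - p) ^ (N - S.card) := by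
    intro S
    rw [hE_eq, hπ, Measure.pi_pi]
    simp only [apply_ite μ, hμA, hμAc]
    rw [Finset.prod_ite, Finset.prod_const, Finset.prod_const]
    congr 1
    · congr 1
      exact congrArg Finset.card (Finset.filter_univ_mem S)
    · congr 1
      rw [Finset.filter_not, Finset.filter_univ_mem, ← Finset.compl_eq_univ_sdiff,
        Finset.card_compl, Fintype.card_fin]
  set D : ℕ → Set (Fin N → Ω) := fun k =>
    {ω | (Finset.univ.filter (fun i => sol (ω i) ≤ lam)).card = k} with hDdef
  have hD_eq : ∀ k, D k = ⋃ S ∈ (Finset.powersetCard k (Finset.univ : Finset (Fin N))), E S := by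
    intro k
    ext ω
    simp only [hDdef, Set.mem_setOf_eq, Set.mem_iUnion, hEdef, Finset.mem_powersetCard,
      exists_prop]
    constructor
    · intro h
      exact ⟨Finset.univ.filter (fun i => sol (ω i) ≤ lam), ⟨Finset.subset_univ _, h⟩, rfl⟩
    · rintro ⟨S, ⟨-, hcard⟩, hfS⟩
      rw [hfS]; exact hcard
  have hEdisj : ∀ k, (↑(Finset.powersetCard k (Finset.univ : Finset (Fin N)))
      : Set (Finset (Fin N))).PairwiseDisjoint E := by
    intro k S _ T _ hST
    refine Set.disjoint_left.2 fun ω hS hT => hST ?_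
    simp only [hEdef, Set.mem_setOf_eq] at hS hT
    rw [← hS, ← hT]
  have hDm : ∀ k, MeasurableSet (D k) := by
    intro k
    rw [hD_eq]
    exact MeasurableSet.biUnion (Finset.powersetCard k Finset.univ).countable_toSet
      fun S _ => hEm S
  have hDμ : ∀ k, π (D k)
      = (N.choose k : ℝ≥0∞) * (ENNReal.ofReal p ^ k * ENNReal.ofReal (1 - p) ^ (N - k)) := by
    intro k
    rw [hD_eq, measure_biUnion_finset (hEdisj k) (fun S _ => hEm S)]
    rw [Finset.sum_congr rfl (fun S hS => by
      rw [hEμ S, (Finset.mem_powersetCard.1 hS).2])]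
    rw [Finset.sum_const, Finset.card_powersetCard, Finset.card_univ, Fintype.card_fin,
      nsmul_eq_mul]
  have hDμ' : ∀ k, π (D k) = ENNReal.ofReal ((N.choose k : ℝ) * p ^ k * (1 - p) ^ (N - k)) := by
    intro k
    rw [hDμ k, ← ENNReal.ofReal_pow hp0, ← ENNReal.ofReal_pow (by linarith : (0:ℝ) ≤ 1 - p),
      ← ENNReal.ofReal_mul (by positivity), ← ENNReal.ofReal_natCast (N.choose k),
      ← ENNReal.ofReal_mul (by positivity), mul_assoc]
  -- bad set
  set bad : Finset ℕ := (Finset.range (N + 1)).filter (fun k => ¬ p ≤ 1 - tstar k) with hbaddef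
  have hbad_lt : ∀ k ∈ bad, k < N := by
    intro k hk
    rw [hbaddef, Finset.mem_filter, Finset.mem_range] at hk
    rcases hk with ⟨hk1, hk2⟩
    rcases Nat.lt_or_ge k N with h | h
    · exact h
    · exfalso
      have : k = N := by omega
      rw [this, htstar_N] at hk2
      simp at hk2
      linarith
  set Bad : Set (Fin N → Ω) := ⋃ k ∈ bad, D k with hBaddef
  have hBadm : MeasurableSet Bad := by
    rw [hBaddef]
    exact MeasurableSet.biUnion bad.countable_toSet fun k _ => hDm k
  have hbound : ∀ k ∈ bad, π (D k) ≤ ENNReal.ofReal ((1 - β) / N) := by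
    intro k hk
    have hkN : k < N := hbad_lt k hk
    have hkN1 : k ≤ N - 1 := by omega
    have hmem := htstar_mem k hkN1
    have heq := htstar_eq k hkN1
    rw [hbaddef, Finset.mem_filter] at hk
    have hlt : 1 - tstar k < p := by linarith [not_le.1 hk.2]
    set t : ℝ := tstar k with ht
    have ht0 : 0 ≤ t := hmem.1
    have ht1 : t ≤ 1 := hmem.2
    rw [hDμ' k]
    apply ENNReal.ofReal_le_ofReal
    set f : ℝ → ℝ := fun x => ∑ i ∈ Finset.range (k + 1),
      (N.choose i : ℝ) * x ^ i * (1 - x) ^ (N - i) with hfdef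
    have step1 : (N.choose k : ℝ) * p ^ k * (1 - p) ^ (N - k) ≤ f p := by
      rw [hfdef]
      refine Finset.single_le_sum (f := fun i => (N.choose i : ℝ) * p ^ i * (1 - p) ^ (N - i))
        (fun i _ => ?_) (Finset.self_mem_range_succ k)
      have h2 : (0 : ℝ) ≤ 1 - p := by linarith
      positivity
    have step2 : f p ≤ f (1 - t) :=
      binomCDF_antitoneOn N k ⟨by linarith, by linarith⟩ ⟨hp0, hp1⟩ (le_of_lt hlt)
    have step3 : f (1 - t) = (1 - β) / N := by
      rw [hfdef]
      simp only [sub_sub_cancel]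
      exact heq
    linarith
  have hBadμ : π Bad ≤ ENNReal.ofReal (1 - β) := by
    calc π Bad ≤ ∑ k ∈ bad, π (D k) := measure_biUnion_finset_le _ _
    _ ≤ ∑ k ∈ bad, ENNReal.ofReal ((1 - β) / N) := Finset.sum_le_sum hbound
    _ = bad.card * ENNReal.ofReal ((1 - β) / N) := by rw [Finset.sum_const, nsmul_eq_mul]
    _ ≤ N * ENNReal.ofReal ((1 - β) / N) := by
        gcongr
        · exact_mod_cast Nat.cast_le.2 (by
            calc bad.card ≤ (Finset.range N).card := Finset.card_le_card (fun k hk => Finset.mem_range.2 (hbad_lt k hk))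
            _ = N := Finset.card_range N)
    _ = ENNReal.ofReal (1 - β) := by
        rw [← ENNReal.ofReal_natCast N, ← ENNReal.ofReal_mul (by positivity)]
        congr 1
        field_simp
  have hsubset : Badᶜ ⊆ {ω : Fin N → Ω |
      p ≤ 1 - tstar ((Finset.univ.filter (fun i : Fin N => sol (ω i) ≤ lam)).card)} := by
    intro ω hω
    by_contra hcon
    apply hω
    rw [hBaddef]
    have hkmem : (Finset.univ.filter (fun i : Fin N => sol (ω i) ≤ lam)).card ∈ bad := by
      rw [hbaddef, Finset.mem_filter, Finset.mem_range]
      refine ⟨?_, hcon⟩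
      have : (Finset.univ.filter (fun i : Fin N => sol (ω i) ≤ lam)).card ≤ N := by
        calc _ ≤ (Finset.univ : Finset (Fin N)).card := Finset.card_filter_le _ _
        _ = N := by rw [Finset.card_univ, Fintype.card_fin]
      omega
    exact Set.mem_biUnion hkmem (show ω ∈ D _ from rfl)
  have hfinal : ENNReal.ofReal β ≤ π Badᶜ := by
    rw [measure_compl hBadm (measure_ne_top π Bad), measure_univ]
    calc ENNReal.ofReal β = 1 - ENNReal.ofReal (1 - β) := by
          rw [← ENNReal.ofReal_one, ← ENNReal.ofReal_sub 1 (by linarith [hβ.2])]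
          norm_num
    _ ≤ 1 - π Bad := tsub_le_tsub_left hBadμ 1
  exact le_trans hfinal (measure_mono hsubset)
end
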